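/- arXiv:1303.7458 — 15 statements merged into one kernel-verified Lean document; each statement's English description precedes it below -/
import Mathlib

section
/- Let R be a commutative ring, M an R-module, and p a prime ideal in sK_R(M). Then there exists a maximal element P of sK_R(M) (with respect to inclusion) such that p ⊆ P. -/
open TensorProduct

/-- `p` is a strong Krull prime of the `R`-module `M`. -/
def IsStrongKrullPrime (R : Type*) [CommRing R] (M : Type*) [AddCommGroup M] [Module R M]
    (p : Ideal R) : Prop :=
  p.IsPrime ∧ ∀ I : Ideal R, I.FG → I ≤ p →
    ∃ z : M, I ≤ LinearMap.ker (LinearMap.toSpanSingleton R M z) ∧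
      LinearMap.ker (LinearMap.toSpanSingleton R M z) ≤ p

theorem stmt_0 {R : Type*} [CommRing R] {M : Type*} [AddCommGroup M] [Module R M]
    {p : Ideal R} (hp : IsStrongKrullPrime R M p) :
    ∃ P : Ideal R, IsStrongKrullPrime R M P ∧ p ≤ P ∧
      ∀ Q : Ideal R, IsStrongKrullPrime R M Q → P ≤ Q → Q = P := by
  have key : ∀ c ⊆ {q : Ideal R | IsStrongKrullPrime R M q}, IsChain (· ≤ ·) c →
      ∀ y ∈ c, ∃ ub ∈ {q : Ideal R | IsStrongKrullPrime R M q}, ∀ z ∈ c, z ≤ ub := by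
    intro c hcs hc q hq
    have hne : c.Nonempty := ⟨q, hq⟩
    have hdir : DirectedOn (· ≤ ·) c := hc.directedOn
    refine ⟨sSup c, ⟨?_, ?_⟩, fun z hz => le_sSup hz⟩
    · constructor
      · intro htop
        have : (1 : R) ∈ sSup c := htop ▸ Submodule.mem_top
        obtain ⟨r, hrc, hr1⟩ := (Submodule.mem_sSup_of_directed hne hdir).1 this
        exact (hcs hrc).1.ne_top (Ideal.eq_top_of_isUnit_mem _ hr1 isUnit_one)
      · intro a b hab
        obtain ⟨r, hrc, hr⟩ := (Submodule.mem_sSup_of_directed hne hdir).1 hab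
        rcases (hcs hrc).1.mem_or_mem hr with h | h
        · exact Or.inl ((Submodule.mem_sSup_of_directed hne hdir).2 ⟨r, hrc, h⟩)
        · exact Or.inr ((Submodule.mem_sSup_of_directed hne hdir).2 ⟨r, hrc, h⟩)
    · intro I hIfg hIle
      have hcompact := (Submodule.fg_iff_compact I).1 hIfg
      obtain ⟨r, hrc, hIr⟩ :=
        ((CompleteLattice.isCompactElement_iff_le_of_directed_sSup_le (α := Ideal R) I).1 hcompact)
          c hne hdir hIle
      obtain ⟨z, hz1, hz2⟩ := (hcs hrc).2 I hIfg hIr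
      exact ⟨z, hz1, hz2.trans (le_sSup hrc)⟩
  obtain ⟨P, hpP, hPmem, hPmax⟩ :=
    zorn_le_nonempty₀ {q : Ideal R | IsStrongKrullPrime R M q} key p hp
  exact ⟨P, hPmem, hpP, fun Q hQ hPQ => le_antisymm (hPmax hQ hPQ) hPQ⟩
end

section
/- Let R be a commutative ring, M an R-module, and x ∈ M. Then x = 0 if and only if x/1 = 0 in M_p for all p ∈ sK_R(M). -/
open TensorProduct

/-- If `p` is a minimal prime over `I` and `x ∈ p`, then `s * x ^ n ∈ I` for some `s ∉ p`. -/
lemma exists_mul_pow_mem_of_mem_minimalPrimes {R : Type*} [CommRing R] {I p : Ideal R}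
    (hp : p ∈ I.minimalPrimes) {x : R} (hx : x ∈ p) :
    ∃ (n : ℕ) (s : R), s ∉ p ∧ s * x ^ n ∈ I := by
  by_contra h
  push_neg at h
  have hprime : p.IsPrime := hp.1.1
  set T : Submonoid R := p.primeCompl ⊔ Submonoid.powers x with hT
  have hdisj : Disjoint (I : Set R) (T : Set R) := by
    rw [Set.disjoint_left]
    rintro a haI haT
    rw [hT, SetLike.mem_coe, Submonoid.mem_sup] at haT
    obtain ⟨s, hs, t, ht, rfl⟩ := haT
    obtain ⟨n, rfl⟩ := ht
    exact h n s hs haI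
  obtain ⟨q, hq, hIq, hqT⟩ := Ideal.exists_le_prime_disjoint I T hdisj
  have hqp : q ≤ p := by
    intro a haq
    by_contra hap
    exact Set.disjoint_left.mp hqT haq (Submonoid.mem_sup_left hap)
  have hpq : p ≤ q := hp.2 ⟨hq, hIq⟩ hqp
  exact Set.disjoint_left.mp hqT (hpq hx) (Submonoid.mem_sup_right ⟨1, pow_one x⟩)

/-- A minimal prime over the annihilator of an element is a strong Krull prime. -/
lemma isStrongKrullPrime_of_minimal {R : Type*} [CommRing R] {M : Type*} [AddCommGroup M]
    [Module R M] {z : M} {p : Ideal R}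
    (hp : p ∈ Ideal.minimalPrimes (LinearMap.ker (LinearMap.toSpanSingleton R M z))) :
    IsStrongKrullPrime R M p := by
  have hprime : p.IsPrime := hp.1.1
  set A : M → Ideal R := fun w => LinearMap.ker (LinearMap.toSpanSingleton R M w) with hA
  have hAmem : ∀ (c : R) (w : M), c ∈ A w ↔ c • w = 0 := by
    intro c w
    simp [hA, LinearMap.mem_ker]
  -- step lemma
  have step : ∀ (w : M) (x : R), A z ≤ A w → A w ≤ p → x ∈ p →
      ∃ w' : M, x • w' = 0 ∧ A w ≤ A w' ∧ A w' ≤ p := by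
    intro w x hzw hwp hx
    obtain ⟨n, s, hs, hsx⟩ := exists_mul_pow_mem_of_mem_minimalPrimes hp hx
    have hne : ∃ j : ℕ, ∃ t : R, t ∉ p ∧ (t * x ^ j) • w = 0 := by
      refine ⟨n, s, hs, ?_⟩
      have := hzw hsx
      rwa [hAmem] at this
    classical
    obtain ⟨t, ht, htw⟩ := Nat.find_spec hne
    have hk0 : Nat.find hne ≠ 0 := by
      intro hk
      rw [hk, pow_zero, mul_one] at htw
      exact ht (hwp ((hAmem t w).mpr htw))
    refine ⟨(t * x ^ (Nat.find hne - 1)) • w, ?_, ?_, ?_⟩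
    · rw [smul_smul, mul_comm x, mul_assoc, ← pow_succ, Nat.sub_add_cancel (Nat.one_le_iff_ne_zero.mpr hk0)]
      exact htw
    · intro c hc
      rw [hAmem] at hc ⊢
      rw [smul_comm, hc, smul_zero]
    · intro c hc
      by_contra hcp
      rw [hAmem, smul_smul] at hc
      have hlt : Nat.find hne - 1 < Nat.find hne := Nat.sub_lt (Nat.pos_of_ne_zero hk0) one_pos
      exact Nat.find_min hne hlt ⟨c * t, fun h => hcp (((hprime.mem_or_mem h).resolve_right ht)),
        by rwa [mul_assoc]⟩
  refine ⟨hprime, ?_⟩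
  intro I hIfg hIp
  obtain ⟨s, rfl⟩ := hIfg
  have key : ∀ s : Finset R, (↑s : Set R) ⊆ p →
      ∃ w : M, A z ≤ A w ∧ A w ≤ p ∧ ∀ x ∈ s, x • w = 0 := by
    classical
    intro s
    induction s using Finset.induction_on with
    | empty => exact fun _ => ⟨z, le_rfl, hp.1.2, by simp⟩
    | @insert a s ha ih =>
      intro hsub
      obtain ⟨w, hzw, hwp, hw⟩ := ih fun y hy => hsub (Finset.mem_coe.mpr (Finset.mem_insert_of_mem hy))
      obtain ⟨w', hxw', hww', hw'p⟩ := step w a hzw hwp (hsub (Finset.mem_coe.mpr (Finset.mem_insert_self a s)))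
      refine ⟨w', hzw.trans hww', hw'p, ?_⟩
      intro y hy
      rcases Finset.mem_insert.mp hy with rfl | hy
      · exact hxw'
      · exact (hAmem y w').mp (hww' ((hAmem y w).mpr (hw y hy)))
  have hsub : (↑s : Set R) ⊆ p := by
    intro y hy
    exact hIp (Ideal.subset_span hy)
  obtain ⟨w, _, hwp, hw⟩ := key s hsub
  refine ⟨w, ?_, hwp⟩
  rw [Ideal.span_le]
  intro y hy
  exact (hAmem y w).mpr (hw y hy)

theorem stmt_1 {R : Type*} [CommRing R] {M : Type*} [AddCommGroup M] [Module R M] (x : M) :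
    x = 0 ↔ ∀ (p : Ideal R) [p.IsPrime], IsStrongKrullPrime R M p →
      LocalizedModule.mkLinearMap p.primeCompl M x = 0 := by
  constructor
  · rintro rfl p _ _
    simp
  · intro h
    by_contra hx
    -- the annihilator of x is a proper ideal
    set J := LinearMap.ker (LinearMap.toSpanSingleton R M x) with hJ
    have hJtop : J ≠ ⊤ := by
      intro hJt
      have : (1 : R) ∈ J := hJt ▸ Submodule.mem_top
      rw [hJ, LinearMap.mem_ker, LinearMap.toSpanSingleton_apply, one_smul] at this
      exact hx this
    obtain ⟨m, hm, hJm⟩ := Ideal.exists_le_maximal J hJtop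
    haveI := hm.isPrime
    obtain ⟨p, hp, hpm⟩ := Ideal.exists_minimalPrimes_le hJm
    haveI hpp : p.IsPrime := hp.1.1
    have hsk := isStrongKrullPrime_of_minimal (z := x) hp
    have h0 := h p hsk
    rw [LocalizedModule.mkLinearMap_apply, ← LocalizedModule.zero_mk (1 : p.primeCompl),
      LocalizedModule.mk_eq] at h0
    obtain ⟨u, hu⟩ := h0
    simp only [one_smul, smul_zero] at hu
    have : (u : R) ∈ p := hp.1.2 (by rw [hJ, LinearMap.mem_ker, LinearMap.toSpanSingleton_apply]; exact hu)
    exact u.2 this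
end

section
/- Let R be a commutative ring and M an R-module. Then sK_R(M) is nonempty if and only if M ≠ 0. -/
open TensorProduct

section Aux

variable {R : Type*} [CommRing R] {M : Type*} [AddCommGroup M] [Module R M]

lemma mem_ann_iff (z : M) (r : R) :
    r ∈ LinearMap.ker (LinearMap.toSpanSingleton R M z) ↔ r • z = 0 := by
  simp [LinearMap.mem_ker]

/-- If `p` is minimal over `Ann z` and `a ∈ p`, then some `s * a ^ n` kills `z` with `s ∉ p`. -/
lemma key_radical {z : M} {p : Ideal R}
    (hp : p ∈ Ideal.minimalPrimes (LinearMap.ker (LinearMap.toSpanSingleton R M z)))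
    {a : R} (ha : a ∈ p) :
    ∃ s ∉ p, ∃ n : ℕ, (s * a ^ n) • z = 0 := by
  by_contra h
  push_neg at h
  haveI hpprime : p.IsPrime := hp.1.1
  set J : Ideal R := LinearMap.ker (LinearMap.toSpanSingleton R M z) with hJ
  set S : Submonoid R := p.primeCompl ⊔ Submonoid.powers a with hS
  have hdisj : Disjoint (J : Set R) (S : Set R) := by
    rw [Set.disjoint_left]
    rintro x hxJ hxS
    obtain ⟨s, hs, t, ht, rfl⟩ := Submonoid.mem_sup.mp hxS
    obtain ⟨n, rfl⟩ := ht
    exact h s hs n ((mem_ann_iff z _).mp hxJ)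
  obtain ⟨q, hq, hJq, hqS⟩ := Ideal.exists_le_prime_disjoint J S hdisj
  have hqp : q ≤ p := by
    intro x hx
    by_contra hxp
    exact Set.disjoint_left.mp hqS hx (Submonoid.mem_sup_left hxp)
  have hpq : p ≤ q := hp.2 ⟨hq, hJq⟩ hqp
  exact Set.disjoint_left.mp hqS (hpq ha)
    (Submonoid.mem_sup_right (Submonoid.mem_powers a))

/-- Single-generator step. -/
lemma key_step {z : M} {p : Ideal R}
    (hp : p ∈ Ideal.minimalPrimes (LinearMap.ker (LinearMap.toSpanSingleton R M z)))
    {a : R} (ha : a ∈ p) :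
    ∃ r : R, a • (r • z) = 0 ∧
      LinearMap.ker (LinearMap.toSpanSingleton R M (r • z)) ≤ p := by
  haveI hpprime : p.IsPrime := hp.1.1
  have hAnn : LinearMap.ker (LinearMap.toSpanSingleton R M z) ≤ p := hp.1.2
  have hex : ∃ n : ℕ, ∃ s, s ∉ p ∧ (s * a ^ n) • z = 0 := by
    obtain ⟨s, hs, n, hn⟩ := key_radical hp ha
    exact ⟨n, s, hs, hn⟩
  classical
  set k := Nat.find hex with hkdef
  obtain ⟨s, hs, hsk⟩ := Nat.find_spec hex
  rw [← hkdef] at hsk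
  have hk1 : 1 ≤ k := by
    by_contra hk0
    have h0 : k = 0 := by omega
    rw [h0, pow_zero, mul_one] at hsk
    exact hs (hAnn ((mem_ann_iff z s).mpr hsk))
  refine ⟨s * a ^ (k - 1), ?_, ?_⟩
  · rw [smul_smul, mul_comm a, mul_assoc, ← pow_succ, Nat.sub_add_cancel hk1]
    exact hsk
  · intro t ht
    rw [mem_ann_iff, smul_smul] at ht
    by_contra htp
    have hts : t * s ∉ p := fun h => (hpprime.mem_or_mem h).elim htp hs
    have hmin := Nat.find_min hex (show k - 1 < k by omega)
    push_neg at hmin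
    exact hmin (t * s) hts (by rw [mul_assoc]; exact ht)

/-- Finitely many generators. -/
lemma key_finset {x : M} {p : Ideal R}
    (hp : p ∈ Ideal.minimalPrimes (LinearMap.ker (LinearMap.toSpanSingleton R M x)))
    (s : Finset R) (hs : (↑s : Set R) ⊆ p) :
    ∃ z : M,
      LinearMap.ker (LinearMap.toSpanSingleton R M x) ≤
        LinearMap.ker (LinearMap.toSpanSingleton R M z) ∧
      LinearMap.ker (LinearMap.toSpanSingleton R M z) ≤ p ∧
      ∀ a ∈ s, a • z = 0 := by
  classical
  induction s using Finset.induction_on with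
  | empty => exact ⟨x, le_rfl, hp.1.2, by simp⟩
  | @insert a s ha ih =>
    obtain ⟨z, hxz, hzp, hz⟩ := ih (by
      intro b hb
      exact hs (Finset.mem_insert_of_mem hb))
    have hap : a ∈ p := hs (Finset.mem_insert_self a s)
    have hpz : p ∈ Ideal.minimalPrimes (LinearMap.ker (LinearMap.toSpanSingleton R M z)) := by
      refine ⟨⟨hp.1.1, hzp⟩, fun q hq hqp => hp.2 ⟨hq.1, le_trans hxz hq.2⟩ hqp⟩
    obtain ⟨r, har, hrp⟩ := key_step hpz hap
    refine ⟨r • z, le_trans hxz ?_, hrp, ?_⟩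
    · intro t ht
      rw [mem_ann_iff] at ht ⊢
      rw [smul_comm, ht, smul_zero]
    · intro b hb
      rcases Finset.mem_insert.mp hb with rfl | hb
      · exact har
      · rw [smul_comm, hz b hb, smul_zero]

end Aux

theorem stmt_2 {R : Type*} [CommRing R] {M : Type*} [AddCommGroup M] [Module R M] :
    (∃ p : Ideal R, IsStrongKrullPrime R M p) ↔ ∃ x : M, x ≠ 0 := by
  constructor
  · rintro ⟨p, hprime, hp⟩
    obtain ⟨z, _, hz⟩ := hp ⊥ (Submodule.fg_bot) bot_le
    refine ⟨z, fun h0 => hprime.ne_top ?_⟩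
    subst h0
    exact top_le_iff.mp (fun t _ => hz (by simp [mem_ann_iff]))
  · rintro ⟨x, hx⟩
    have hne : LinearMap.ker (LinearMap.toSpanSingleton R M x) ≠ ⊤ := by
      intro h
      apply hx
      have : (1 : R) ∈ LinearMap.ker (LinearMap.toSpanSingleton R M x) := h ▸ trivial
      simpa [mem_ann_iff] using this
    obtain ⟨m, hm, hlem⟩ := Ideal.exists_le_maximal _ hne
    haveI := hm.isPrime
    obtain ⟨p, hp, _⟩ := Ideal.exists_minimalPrimes_le hlem
    refine ⟨p, hp.1.1, fun I hIfg hIp => ?_⟩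
    obtain ⟨t, ht⟩ := hIfg
    obtain ⟨z, _, hzp, hz⟩ := key_finset hp t (by
      intro b hb
      exact hIp (ht ▸ Ideal.subset_span hb))
    refine ⟨z, ?_, hzp⟩
    rw [← ht, Ideal.span_le]
    intro b hb
    rw [SetLike.mem_coe, mem_ann_iff]
    exact hz b hb
end

section
/- Let R be a commutative ring, L ⊆ M an inclusion of R-modules. Then sK_R(M) ⊆ sK_R(L) ∪ sK_R(M/L). -/
open TensorProduct

theorem stmt_3 {R : Type*} [CommRing R] {M : Type*} [AddCommGroup M] [Module R M]
    (L : Submodule R M) (p : Ideal R) (hp : IsStrongKrullPrime R M p) :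
    IsStrongKrullPrime R L p ∨ IsStrongKrullPrime R (M ⧸ L) p := by
  by_cases hq : IsStrongKrullPrime R (M ⧸ L) p
  · exact Or.inr hq
  left
  obtain ⟨hpp, hM⟩ := hp
  refine ⟨hpp, ?_⟩
  rw [IsStrongKrullPrime, not_and_or] at hq
  rcases hq with h | h
  · exact absurd hpp h
  push_neg at h
  obtain ⟨I₀, hI₀fg, hI₀p, hI₀⟩ := h
  intro J hJfg hJp
  obtain ⟨z, hz1, hz2⟩ := hM (I₀ ⊔ J) (Submodule.FG.sup hI₀fg hJfg) (sup_le hI₀p hJp)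
  have hker : I₀ ≤ LinearMap.ker
      (LinearMap.toSpanSingleton R (M ⧸ L) (Submodule.Quotient.mk z)) := by
    intro a ha
    have haz : a • z = 0 := hz1 (Ideal.mem_sup_left ha)
    simp [LinearMap.mem_ker, LinearMap.toSpanSingleton_apply,
      ← Submodule.Quotient.mk_smul, haz]
  have hns := hI₀ (Submodule.Quotient.mk z) hker
  obtain ⟨r, hr1, hr2⟩ := Set.not_subset.mp hns
  have hrL : r • z ∈ L := by
    simpa [LinearMap.mem_ker, LinearMap.toSpanSingleton_apply,
      ← Submodule.Quotient.mk_smul, Submodule.Quotient.mk_eq_zero] using hr1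
  refine ⟨⟨r • z, hrL⟩, ?_, ?_⟩
  · intro a ha
    have haz : a • z = 0 := hz1 (Ideal.mem_sup_right ha)
    have : a • (r • z) = 0 := by rw [smul_comm, haz, smul_zero]
    simp only [LinearMap.mem_ker, LinearMap.toSpanSingleton_apply]
    exact Subtype.ext this
  · intro a ha
    have h0 : a • (r • z) = 0 := by
      have := Subtype.ext_iff.mp (LinearMap.mem_ker.mp ha)
      simpa using this
    have har : a * r ∈ LinearMap.ker (LinearMap.toSpanSingleton R M z) := by
      simpa [LinearMap.mem_ker, LinearMap.toSpanSingleton_apply, mul_smul] using h0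
    exact (hpp.mem_or_mem (hz2 har)).resolve_right hr2
end

section
/- Let R be a commutative ring, p a prime ideal, and M an R-module. Then p ∈ sK_R(M) if and only if pR_p ∈ sK_{R_p}(M_p). -/
open TensorProduct

theorem stmt_4 {R : Type*} [CommRing R] {M : Type*} [AddCommGroup M] [Module R M]
    (p : Ideal R) [p.IsPrime] :
    IsStrongKrullPrime R M p ↔
      IsStrongKrullPrime (Localization p.primeCompl) (LocalizedModule p.primeCompl M)
        (p.map (algebraMap R (Localization p.primeCompl))) := by
  classical
  have hp : p.IsPrime := inferInstance
  set S := p.primeCompl with hS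
  set f := algebraMap R (Localization p.primeCompl) with hf
  have hdisj : Disjoint (S : Set R) (p : Set R) :=
    Set.disjoint_left.mpr fun {x} hx h2 => hx h2
  have hcomap : (p.map f).comap f = p :=
    IsLocalization.comap_map_of_isPrime_disjoint S _ (I := p) hp hdisj
  constructor
  · rintro ⟨hp, h⟩
    refine ⟨IsLocalization.isPrime_of_isPrime_disjoint S _ p hp hdisj, ?_⟩
    intro J hJ hJle
    obtain ⟨s, rfl⟩ := hJ
    set a : Localization p.primeCompl → R := fun x => (IsLocalization.sec S x).1 with ha
    set t : Localization p.primeCompl → S := fun x => (IsLocalization.sec S x).2 with ht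
    have hmem : ∀ x ∈ s, a x ∈ p := by
      intro x hx
      have hx' : x ∈ p.map f := hJle (Ideal.subset_span hx)
      have hfa : f (a x) ∈ p.map f := by
        rw [← IsLocalization.sec_spec]
        exact Ideal.mul_mem_right _ _ hx'
      rw [← hcomap]
      exact hfa
    obtain ⟨z, hz1, hz2⟩ := h (Ideal.span (s.image a)) ⟨s.image a, rfl⟩ (by
      rw [Ideal.span_le]
      intro r hr
      simp only [Finset.coe_image, Set.mem_image, Finset.mem_coe] at hr
      obtain ⟨x, hx, rfl⟩ := hr
      exact hmem x hx)
    refine ⟨LocalizedModule.mk z 1, ?_, ?_⟩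
    · rw [Ideal.span_le]
      intro x hx
      rw [SetLike.mem_coe, LinearMap.mem_ker, LinearMap.toSpanSingleton_apply]
      have hxeq : x = Localization.mk (a x) (t x) := by
        rw [Localization.mk_eq_mk', IsLocalization.mk'_sec]
      have haz : a x • z = 0 := by
        have := hz1 (Ideal.subset_span (by
          exact Finset.mem_coe.mpr (Finset.mem_image_of_mem a hx)))
        rwa [LinearMap.mem_ker, LinearMap.toSpanSingleton_apply] at this
      rw [hxeq, LocalizedModule.mk_smul_mk, haz, LocalizedModule.zero_mk]
    · intro x hx
      rw [LinearMap.mem_ker, LinearMap.toSpanSingleton_apply] at hx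
      have hxeq : x = Localization.mk (a x) (t x) := by
        rw [Localization.mk_eq_mk', IsLocalization.mk'_sec]
      rw [hxeq, LocalizedModule.mk_smul_mk,
        show (0 : LocalizedModule S M) = LocalizedModule.mk 0 1 from
          (LocalizedModule.zero_mk 1).symm, LocalizedModule.mk_eq] at hx
      obtain ⟨u, hu⟩ := hx
      simp only [one_smul, smul_zero] at hu
      have huz : ((u : R) * a x) • z = 0 := by
        rw [mul_smul]
        simpa [Submonoid.smul_def] using hu
      have hap : a x ∈ p := by
        have hmem' := hz2 (LinearMap.mem_ker.mpr (by
          rw [LinearMap.toSpanSingleton_apply]; exact huz))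
        rcases hp.mem_or_mem hmem' with h' | h'
        · exact absurd h' u.2
        · exact h'
      rw [hxeq, Localization.mk_eq_mk', IsLocalization.mk'_eq_mul_mk'_one]
      exact Ideal.mul_mem_right _ _ (Ideal.mem_map_of_mem f hap)
  · rintro ⟨hp', h⟩
    refine ⟨hp, ?_⟩
    intro I hI hIle
    obtain ⟨z', hz1, hz2⟩ := h (I.map f) (Ideal.FG.map hI f) (Ideal.map_mono hIle)
    obtain ⟨sgen, hsgen⟩ := hI
    induction' z' using LocalizedModule.induction_on with m s0
    have key : ∀ b ∈ sgen, ∃ u : S, (u : R) • b • m = 0 := by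
      intro b hb
      have hbI : b ∈ I := hsgen ▸ Ideal.subset_span hb
      have hb0 : f b • LocalizedModule.mk m s0 = 0 := by
        have := hz1 (Ideal.mem_map_of_mem f hbI)
        rwa [LinearMap.mem_ker, LinearMap.toSpanSingleton_apply] at this
      rw [← Localization.mk_one_eq_algebraMap, LocalizedModule.mk_smul_mk,
        show (0 : LocalizedModule S M) = LocalizedModule.mk 0 1 from
          (LocalizedModule.zero_mk 1).symm, LocalizedModule.mk_eq] at hb0
      obtain ⟨u, hu⟩ := hb0
      simp only [one_mul, one_smul, smul_zero] at hu
      exact ⟨u, by simpa [Submonoid.smul_def] using hu⟩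
    set u : R → S := fun b => if hb : b ∈ sgen then (key b hb).choose else 1 with hudef
    have hu : ∀ b ∈ sgen, ((u b : R)) • b • m = 0 := by
      intro b hb
      simp only [hudef, dif_pos hb]
      exact (key b hb).choose_spec
    set tt : S := ∏ b ∈ sgen, u b with htt
    set z : M := (tt : R) • m with hz
    have hkill : ∀ b ∈ sgen, b • z = 0 := by
      intro b hb
      have hcoe : (tt : R) = ∏ x ∈ sgen, (u x : R) := by
        simp [htt]
      have hprod : b * (tt : R) =
          (∏ x ∈ sgen.erase b, (u x : R)) * ((u b : R) * b) := by
        rw [hcoe, ← Finset.mul_prod_erase sgen _ hb]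
        ring
      rw [hz, smul_smul, hprod, mul_smul, mul_smul, hu b hb, smul_zero]
    refine ⟨z, ?_, ?_⟩
    · rw [← hsgen, Ideal.span_le]
      intro b hb
      rw [SetLike.mem_coe, LinearMap.mem_ker, LinearMap.toSpanSingleton_apply]
      exact hkill b hb
    · intro b hb
      rw [LinearMap.mem_ker, LinearMap.toSpanSingleton_apply] at hb
      have hbz : tt • (b • m) = 0 := by
        rw [Submonoid.smul_def, smul_smul, mul_comm, ← smul_smul]
        exact hb
      have hfb : f b • LocalizedModule.mk m s0 = 0 := by
        rw [← Localization.mk_one_eq_algebraMap, LocalizedModule.mk_smul_mk,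
          show (0 : LocalizedModule S M) = LocalizedModule.mk 0 1 from
            (LocalizedModule.zero_mk 1).symm, LocalizedModule.mk_eq]
        exact ⟨tt, by simpa using hbz⟩
      have : f b ∈ p.map f := hz2 (LinearMap.mem_ker.mpr (by
        rw [LinearMap.toSpanSingleton_apply]; exact hfb))
      rw [← hcomap]
      exact this
end

section
/- Let (R,m) be a commutative local ring, M a flat R-module, and L an R-module. If m ∈ sK_R(L ⊗_R M), then m ∈ sK_R(L). If M is moreover faithfully flat, then m ∈ sK_R(L) implies m ∈ sK_R(L ⊗_R M). -/
open TensorProduct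

universe u v

/-- Key auxiliary: if `M` is flat and some nonzero `t : L ⊗ M` is killed by all elements
of a list `s`, then some nonzero `z : L` is killed by all elements of `s`. -/
lemma aux_descend {R : Type v} [CommRing R]
    (M : Type*) [AddCommGroup M] [Module R M] [Module.Flat R M] :
    ∀ (s : List R) (L : Type u) [AddCommGroup L] [Module R L] (t : L ⊗[R] M),
      t ≠ 0 → (∀ a ∈ s, a • t = 0) → ∃ z : L, z ≠ 0 ∧ ∀ a ∈ s, a • z = 0 := by
  intro s
  induction s with
  | nil =>
    intro L _ _ t ht _
    by_cases hsub : ∀ z : L, z = 0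
    · have : Subsingleton L := subsingleton_iff_forall_eq 0 |>.mpr hsub
      exact absurd (Subsingleton.elim _ _) ht
    · push_neg at hsub
      obtain ⟨z, hz⟩ := hsub
      exact ⟨z, hz, by simp⟩
  | cons a s ih =>
    intro L _ _ t ht hkill
    set N := LinearMap.ker (LinearMap.lsmul R L a) with hN
    have hι : Function.Injective (N.subtype.rTensor M) :=
      Module.Flat.rTensor_preserves_injective_linearMap _ N.injective_subtype
    -- rTensor of lsmul is scalar multiplication
    have hls : (LinearMap.lsmul R L a).rTensor M = a • LinearMap.id := by
      ext x m
      simp [smul_tmul']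
    have hexact : Function.Exact (N.subtype.rTensor M) ((LinearMap.lsmul R L a).rTensor M) :=
      Module.Flat.rTensor_exact M
        (LinearMap.exact_iff.mpr (Submodule.range_subtype N).symm)
    have ht0 : ((LinearMap.lsmul R L a).rTensor M) t = 0 := by
      rw [hls]
      simpa using hkill a List.mem_cons_self
    obtain ⟨t', ht'⟩ := (hexact t).mp ht0
    have ht'ne : t' ≠ 0 := by
      rintro rfl
      rw [map_zero] at ht'
      exact ht ht'.symm
    have hkill' : ∀ b ∈ s, b • t' = 0 := by
      intro b hb
      apply hι
      rw [map_smul, ht', map_zero]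
      exact hkill b (List.mem_cons_of_mem a hb)
    obtain ⟨z, hz, hzkill⟩ := ih N t' ht'ne hkill'
    refine ⟨(z : L), by simpa using hz, ?_⟩
    intro b hb
    rcases List.mem_cons.mp hb with rfl | hb
    · exact z.2
    · have := hzkill b hb
      calc b • (z : L) = ((b • z : N) : L) := rfl
        _ = 0 := by rw [this]; rfl

lemma aux_ker_le {R : Type*} [CommRing R] [IsLocalRing R]
    {L : Type*} [AddCommGroup L] [Module R L] {z : L} (hz : z ≠ 0) :
    LinearMap.ker (LinearMap.toSpanSingleton R L z) ≤ IsLocalRing.maximalIdeal R := by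
  apply IsLocalRing.le_maximalIdeal
  intro h
  have : (1 : R) ∈ LinearMap.ker (LinearMap.toSpanSingleton R L z) := h ▸ trivial
  simp only [LinearMap.mem_ker, LinearMap.toSpanSingleton_apply, one_smul] at this
  exact hz this

lemma aux_ne_zero {R : Type*} [CommRing R] [IsLocalRing R]
    {L : Type*} [AddCommGroup L] [Module R L] {z : L}
    (h : LinearMap.ker (LinearMap.toSpanSingleton R L z) ≤ IsLocalRing.maximalIdeal R) :
    z ≠ 0 := by
  rintro rfl
  have : (1 : R) ∈ LinearMap.ker (LinearMap.toSpanSingleton R L (0 : L)) := by simp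
  exact (IsLocalRing.maximalIdeal.isMaximal R).ne_top (Ideal.eq_top_of_isUnit_mem _ (h this) isUnit_one)

theorem stmt_6 {R : Type*} [CommRing R] [IsLocalRing R]
    {M : Type*} [AddCommGroup M] [Module R M] [Module.Flat R M]
    {L : Type*} [AddCommGroup L] [Module R L] :
    (IsStrongKrullPrime R (L ⊗[R] M) (IsLocalRing.maximalIdeal R) →
      IsStrongKrullPrime R L (IsLocalRing.maximalIdeal R)) ∧
    (Module.FaithfullyFlat R M →
      IsStrongKrullPrime R L (IsLocalRing.maximalIdeal R) →
        IsStrongKrullPrime R (L ⊗[R] M) (IsLocalRing.maximalIdeal R)) := by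
  constructor
  · rintro ⟨hp, h⟩
    refine ⟨hp, ?_⟩
    intro I hIfg hIm
    obtain ⟨t, ht1, ht2⟩ := h I hIfg hIm
    have htne : t ≠ 0 := aux_ne_zero ht2
    obtain ⟨S, hS⟩ := hIfg
    have hkill : ∀ a ∈ S.toList, a • t = 0 := by
      intro a ha
      have haI : a ∈ I := hS ▸ Ideal.subset_span (by simpa using ha)
      have := ht1 haI
      simpa using this
    obtain ⟨z, hz, hzkill⟩ := aux_descend M S.toList L t htne hkill
    refine ⟨z, ?_, aux_ker_le hz⟩
    rw [← hS, Ideal.span_le]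
    intro a ha
    have := hzkill a (by simpa using ha)
    simpa using this
  · rintro hff ⟨hp, h⟩
    refine ⟨hp, ?_⟩
    intro I hIfg hIm
    obtain ⟨z, hz1, hz2⟩ := h I hIfg hIm
    have hzne : z ≠ 0 := aux_ne_zero hz2
    have : ∃ m0 : M, z ⊗ₜ[R] m0 ≠ 0 := by
      by_contra hc
      push_neg at hc
      have h0 : (LinearMap.toSpanSingleton R L z).rTensor M = 0 := by
        ext r
        simpa using hc r
      have := (Module.FaithfullyFlat.zero_iff_rTensor_zero R M
        (LinearMap.toSpanSingleton R L z)).mpr h0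
      have h1 := congrArg (fun f => f 1) this
      simp only [LinearMap.toSpanSingleton_apply, one_smul, LinearMap.zero_apply] at h1
      exact hzne h1
    obtain ⟨m0, hm0⟩ := this
    refine ⟨z ⊗ₜ[R] m0, ?_, aux_ker_le hm0⟩
    intro a ha
    have haz : a • z = 0 := by simpa using hz1 ha
    simp only [LinearMap.mem_ker, LinearMap.toSpanSingleton_apply]
    rw [smul_tmul', haz, zero_tmul]
end

section
/- Let R be a commutative ring and M a flat R-module. If M ⊗_R Q is flat over the total quotient ring Q of R and sK_R(L ⊗_R M) ⊆ sK_R(L) for every R-module L, then for every torsion-free R-module L, the module L ⊗_R M is torsion-free. -/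
open TensorProduct

/-- A module is torsion-free if every `R`-regular element acts injectively. -/
def TorsionFree (R : Type*) [CommRing R] (M : Type*) [AddCommGroup M] [Module R M] : Prop :=
  ∀ r ∈ nonZeroDivisors R, ∀ x : M, r • x = 0 → x = 0

universe u

theorem stmt_8 {R : Type u} [CommRing R] {M : Type u} [AddCommGroup M] [Module R M]
    [Module.Flat R M]
    (hQ : Module.Flat (FractionRing R) (FractionRing R ⊗[R] M))
    (hsk : ∀ (L : Type u) [AddCommGroup L] [Module R L] (p : Ideal R),
      IsStrongKrullPrime R (L ⊗[R] M) p → IsStrongKrullPrime R L p)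
    (L : Type u) [AddCommGroup L] [Module R L] (hL : TorsionFree R L) :
    TorsionFree R (L ⊗[R] M) := by
  intro r hr x hx
  set Q := FractionRing R
  let f : L →ₗ[R] Q ⊗[R] L := (TensorProduct.mk R Q L) 1
  have hbc : IsLocalizedModule (nonZeroDivisors R) f :=
    (isLocalizedModule_iff_isBaseChange (nonZeroDivisors R) Q f).mpr
      (TensorProduct.isBaseChange R L Q)
  have hf : Function.Injective f := by
    intro a b hab
    rw [← sub_eq_zero, ← map_sub] at hab
    obtain ⟨s, hs⟩ := (IsLocalizedModule.eq_zero_iff (nonZeroDivisors R) f).mp hab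
    exact sub_eq_zero.mp (hL s s.2 _ hs)
  have hg : Function.Injective (f.rTensor M) :=
    Module.Flat.rTensor_preserves_injective_linearMap f hf
  apply hg
  rw [map_zero]
  have h1 : (f.rTensor M) (r • x) = r • (f.rTensor M x) := map_smul _ _ _
  rw [hx, map_zero] at h1
  set y := (f.rTensor M) x with hy
  have hu : IsUnit (algebraMap R Q r) := IsLocalization.map_units Q ⟨r, hr⟩
  have h2 : (algebraMap R Q r) • y = 0 := by
    rw [algebraMap_smul]; exact h1.symm
  obtain ⟨u, hu'⟩ := hu
  calc y = (↑u⁻¹ : Q) • ((u : Q) • y) := by rw [smul_smul, Units.inv_mul, one_smul]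
    _ = 0 := by rw [hu', h2, smul_zero]
end

section
/- Let R be a commutative ring and M an R-module such that Tor_1^R(R/I, M) is torsion-free for every finitely generated ideal I of R, and M ⊗_R Q is flat over the total quotient ring Q of R. Then M is flat. -/
open TensorProduct

open CategoryTheory

universe u

section Aux
variable {R : Type u} [CommRing R] (I : Ideal R)

noncomputable def multMap (N : Type u) [AddCommGroup N] [Module R N] :
    (↥I ⊗[R] N) →ₗ[R] N :=
  (TensorProduct.lid R N).toLinearMap ∘ₗ LinearMap.rTensor N I.subtype

@[simp] lemma multMap_tmul (N : Type u) [AddCommGroup N] [Module R N] (a : ↥I) (n : N) :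
    multMap I N (a ⊗ₜ n) = (a : R) • n := rfl

lemma range_multMap (N : Type u) [AddCommGroup N] [Module R N] :
    LinearMap.range (multMap I N) = I • (⊤ : Submodule R N) := by
  apply le_antisymm
  · rintro _ ⟨x, rfl⟩
    induction x using TensorProduct.induction_on with
    | zero => simp
    | tmul a n => simpa using Submodule.smul_mem_smul a.2 (Submodule.mem_top (x := n))
    | add x y hx hy => rw [map_add]; exact add_mem hx hy
  · rw [Submodule.smul_le]
    intro a ha n _
    exact ⟨⟨a, ha⟩ ⊗ₜ n, by simp⟩

lemma multMap_natural {N N' : Type u} [AddCommGroup N] [Module R N] [AddCommGroup N']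
    [Module R N'] (f : N →ₗ[R] N') :
    multMap I N' ∘ₗ LinearMap.lTensor ↥I f = f ∘ₗ multMap I N := by
  apply TensorProduct.ext'
  intro a n
  simp

lemma smul_le_comap {N N' : Type u} [AddCommGroup N] [Module R N] [AddCommGroup N']
    [Module R N'] (f : N →ₗ[R] N') :
    I • (⊤ : Submodule R N) ≤ (I • (⊤ : Submodule R N')).comap f := by
  rw [Submodule.smul_le]
  intro a ha n _
  simpa using Submodule.smul_mem_smul ha (Submodule.mem_top (x := f n))

noncomputable def quotMap {N N' : Type u} [AddCommGroup N] [Module R N] [AddCommGroup N']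
    [Module R N'] (f : N →ₗ[R] N') :
    (N ⧸ (I • (⊤ : Submodule R N))) →ₗ[R] (N' ⧸ (I • (⊤ : Submodule R N'))) :=
  Submodule.mapQ _ _ f (smul_le_comap I f)

lemma quotEquiv_natural {N N' : Type u} [AddCommGroup N] [Module R N] [AddCommGroup N']
    [Module R N'] (f : N →ₗ[R] N') :
    (TensorProduct.quotTensorEquivQuotSMul N' I).toLinearMap ∘ₗ
        LinearMap.lTensor (R ⧸ I) f
      = quotMap I f ∘ₗ (TensorProduct.quotTensorEquivQuotSMul N I).toLinearMap := by
  apply TensorProduct.ext'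
  intro a n
  obtain ⟨r, rfl⟩ := Ideal.Quotient.mk_surjective a
  simp [quotMap, TensorProduct.quotTensorEquivQuotSMul_mk_tmul, Submodule.mapQ_apply]

end Aux

instance kerACGAux {R : Type u} [CommRing R] (I : Ideal R) {P P' : Type u} [AddCommGroup P]
    [AddCommGroup P'] [Module R P] [Module R P'] (d : P →ₗ[R] P') :
    AddCommGroup ↥(LinearMap.ker (LinearMap.lTensor (R ⧸ I) d)) := inferInstance

instance kerACGAux2 {R : Type u} [CommRing R] (I : Ideal R) (M : Type u) [AddCommGroup M]
    [Module R M] : AddCommGroup ↥(LinearMap.ker (LinearMap.rTensor M I.subtype)) := inferInstance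

section Key

variable {R : Type u} [CommRing R] (I : Ideal R)
variable {M P0 P1 P2 Q2 : Type u}
variable [AddCommGroup M] [AddCommGroup P0] [AddCommGroup P1] [AddCommGroup P2] [AddCommGroup Q2]
variable [Module R M] [Module R P0] [Module R P1] [Module R P2] [Module R Q2]

set_option maxHeartbeats 1000000 in
theorem key_equiv (hflat : Module.Flat R P0)
    (d2 : P2 →ₗ[R] P1) (d1 : P1 →ₗ[R] P0) (ε : P0 →ₗ[R] M)
    (hε : Function.Surjective ε)
    (h0 : LinearMap.range d1 = LinearMap.ker ε)
    (h1 : LinearMap.range d2 = LinearMap.ker d1)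
    (q : Q2 →ₗ[R] ↥(LinearMap.ker (LinearMap.lTensor (R ⧸ I) d1)))
    (hq : Submodule.map (LinearMap.ker (LinearMap.lTensor (R ⧸ I) d1)).subtype
        (LinearMap.range q) = LinearMap.range (LinearMap.lTensor (R ⧸ I) d2)) :
    Nonempty ((↥(LinearMap.ker (LinearMap.lTensor (R ⧸ I) d1)) ⧸ LinearMap.range q)
      ≃ₗ[R] ↥(LinearMap.ker (LinearMap.rTensor M I.subtype))) := by
  classical
  -- basic consequences
  have hεd1 : ∀ y : P1, ε (d1 y) = 0 := by
    intro y
    have hm : d1 y ∈ LinearMap.ker ε := by rw [← h0]; exact LinearMap.mem_range_self d1 y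
    exact hm
  have hd1d2 : ∀ y : P2, d1 (d2 y) = 0 := by
    intro y
    have hm : d2 y ∈ LinearMap.ker d1 := by rw [← h1]; exact LinearMap.mem_range_self d2 y
    exact hm
  -- the multiplication map on P0 is injective by flatness
  have minj : Function.Injective (multMap I P0) := by
    have := Module.Flat.iff_rTensor_injective'.mp hflat I
    exact (TensorProduct.lid R P0).injective.comp this
  -- θ : I ⊗ P0 ≃ I • P0
  let θ : (↥I ⊗[R] P0) ≃ₗ[R] ↥(I • (⊤ : Submodule R P0)) :=
    (LinearEquiv.ofInjective (multMap I P0) minj).trans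
      (LinearEquiv.ofEq _ _ (range_multMap I P0))
  have hθval : ∀ x : ↥I ⊗[R] P0, ((θ x : P0)) = multMap I P0 x := fun x => rfl
  have hθsymm : ∀ y : ↥(I • (⊤ : Submodule R P0)), multMap I P0 (θ.symm y) = (y : P0) :=
    fun y => by rw [← hθval, θ.apply_symm_apply]
  -- membership in K via multMap
  have memK : ∀ z : ↥I ⊗[R] M, z ∈ LinearMap.ker (LinearMap.rTensor M I.subtype)
      ↔ multMap I M z = 0 := by
    intro z
    rw [LinearMap.mem_ker]
    constructor
    · intro h; simp [multMap, h]
    · intro h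
      exact (TensorProduct.lid R M).injective (by simpa [multMap] using h)
  -- Z1pre and Bpre
  set Z1pre : Submodule R P1 := (I • (⊤ : Submodule R P0)).comap d1 with hZ1pre
  set Bpre : Submodule R P1 := LinearMap.range d2 ⊔ I • (⊤ : Submodule R P1) with hBpre
  -- the map φ₀ : Z1pre → I ⊗ M
  let step1 : ↥Z1pre →ₗ[R] ↥(I • (⊤ : Submodule R P0)) :=
    LinearMap.codRestrict _ (d1 ∘ₗ Z1pre.subtype) (fun x => x.2)
  let φ₀ : ↥Z1pre →ₗ[R] (↥I ⊗[R] M) :=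
    LinearMap.lTensor ↥I ε ∘ₗ θ.symm.toLinearMap ∘ₗ step1
  have hφ₀x : ∀ x : ↥Z1pre, φ₀ x
      = LinearMap.lTensor ↥I ε (θ.symm ⟨d1 (x : P1), x.2⟩) := fun x => rfl
  have hφK : ∀ x : ↥Z1pre, φ₀ x ∈ LinearMap.ker (LinearMap.rTensor M I.subtype) := by
    intro x
    rw [memK]
    have : multMap I M (LinearMap.lTensor ↥I ε (θ.symm ⟨d1 (x : P1), x.2⟩))
        = ε (multMap I P0 (θ.symm ⟨d1 (x : P1), x.2⟩)) := by
      rw [← LinearMap.comp_apply, multMap_natural, LinearMap.comp_apply]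
    rw [hφ₀x, this, hθsymm]
    exact hεd1 (x : P1)
  let φ : ↥Z1pre →ₗ[R] ↥(LinearMap.ker (LinearMap.rTensor M I.subtype)) :=
    LinearMap.codRestrict _ φ₀ hφK
  -- surjectivity of φ
  have hφsurj : Function.Surjective φ := by
    rintro ⟨k, hk⟩
    obtain ⟨u, hu⟩ := LinearMap.lTensor_surjective (↥I) hε k
    have hεp : ε (multMap I P0 u) = 0 := by
      rw [← LinearMap.comp_apply, ← multMap_natural, LinearMap.comp_apply, hu]
      exact (memK k).mp hk
    have : multMap I P0 u ∈ LinearMap.range d1 := h0 ▸ hεp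
    obtain ⟨x, hx⟩ := this
    have hxZ : x ∈ Z1pre := by
      rw [hZ1pre, Submodule.mem_comap, hx, ← range_multMap I P0]
      exact LinearMap.mem_range_self _ u
    refine ⟨⟨x, hxZ⟩, ?_⟩
    apply Subtype.ext
    show φ₀ ⟨x, hxZ⟩ = k
    rw [hφ₀x]
    have : θ.symm ⟨d1 x, hxZ⟩ = u := by
      apply minj
      rw [hθsymm]
      show d1 x = multMap I P0 u
      exact hx
    rw [this, hu]
  -- kernel of φ₀
  have hkerφ : ∀ x : ↥Z1pre, φ₀ x = 0 ↔ (x : P1) ∈ Bpre := by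
    intro x
    constructor
    · intro hφ0
      set u := θ.symm ⟨d1 (x : P1), x.2⟩ with hu
      have hexact : Function.Exact (LinearMap.lTensor ↥I (LinearMap.ker ε).subtype)
          (LinearMap.lTensor ↥I ε) :=
        lTensor_exact (↥I) (LinearMap.exact_subtype_ker_map ε) hε
      have hu0 : LinearMap.lTensor ↥I ε u = 0 := by rw [← hφ₀x x, hφ0]
      obtain ⟨w, hw⟩ := (hexact u).mp hu0
      -- ρ : P1 → ker ε surjective
      let ρ : P1 →ₗ[R] ↥(LinearMap.ker ε) :=
        LinearMap.codRestrict _ d1 (fun y => h0 ▸ LinearMap.mem_range_self d1 y)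
      have hρsurj : Function.Surjective ρ := by
        rintro ⟨z, hz⟩
        obtain ⟨y, hy⟩ := (h0.symm ▸ hz : z ∈ LinearMap.range d1)
        exact ⟨y, Subtype.ext hy⟩
      obtain ⟨v, hv⟩ := LinearMap.lTensor_surjective (↥I) hρsurj w
      have hsub : (LinearMap.ker ε).subtype ∘ₗ ρ = d1 := by ext y; rfl
      have huv : u = LinearMap.lTensor ↥I d1 v := by
        rw [← hsub, LinearMap.lTensor_comp, LinearMap.comp_apply, hv, hw]
      have hd1 : d1 (multMap I P1 v) = d1 (x : P1) := by
        rw [← LinearMap.comp_apply, ← multMap_natural, LinearMap.comp_apply, ← huv, hu, hθsymm]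
      have : (x : P1) - multMap I P1 v ∈ LinearMap.ker d1 := by
        rw [LinearMap.mem_ker, map_sub, hd1, sub_self]
      rw [← h1] at this
      obtain ⟨y, hy⟩ := this
      rw [hBpre]
      have hxeq : (x : P1) = d2 y + multMap I P1 v := by rw [hy]; abel
      rw [hxeq]
      exact Submodule.add_mem_sup (LinearMap.mem_range_self _ y)
        (range_multMap I P1 ▸ LinearMap.mem_range_self _ v)
    · intro hx
      rw [hBpre] at hx
      obtain ⟨a, ha, b, hb, hab⟩ := Submodule.mem_sup.mp hx
      obtain ⟨y, hy⟩ := ha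
      rw [← range_multMap I P1] at hb
      obtain ⟨v, hv⟩ := hb
      have hd1xb : d1 (x : P1) = d1 b := by
        rw [← hab, map_add, ← hy, hd1d2 y, zero_add]
      have hd1x : multMap I P0 (LinearMap.lTensor ↥I d1 v) = d1 (x : P1) := by
        rw [← LinearMap.comp_apply, multMap_natural, LinearMap.comp_apply, hv]
        exact hd1xb.symm
      have : θ.symm ⟨d1 (x : P1), x.2⟩ = LinearMap.lTensor ↥I d1 v := by
        apply minj
        rw [hθsymm]
        show d1 (x : P1) = multMap I P0 (LinearMap.lTensor ↥I d1 v)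
        exact hd1x.symm
      rw [hφ₀x, this, ← LinearMap.comp_apply, ← LinearMap.lTensor_comp]
      have hc : ε ∘ₗ d1 = 0 := by ext y; exact hεd1 y
      rw [hc, LinearMap.lTensor_zero, LinearMap.zero_apply]
  -- quotient side
  let e0 := TensorProduct.quotTensorEquivQuotSMul P0 I
  let e1 := TensorProduct.quotTensorEquivQuotSMul P1 I
  let e2 := TensorProduct.quotTensorEquivQuotSMul P2 I
  let ψ₀ : ↥Z1pre →ₗ[R] ((R ⧸ I) ⊗[R] P1) :=
    e1.symm.toLinearMap ∘ₗ (I • (⊤ : Submodule R P1)).mkQ ∘ₗ Z1pre.subtype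
  have hψ₀x : ∀ x : ↥Z1pre, ψ₀ x = e1.symm (Submodule.Quotient.mk (x : P1)) := fun _ => rfl
  have nat1 : ∀ z : (R ⧸ I) ⊗[R] P1,
      e0 (LinearMap.lTensor (R ⧸ I) d1 z) = quotMap I d1 (e1 z) := by
    intro z
    have := LinearMap.congr_fun (quotEquiv_natural I d1) z
    simpa using this
  have nat2 : ∀ z : (R ⧸ I) ⊗[R] P2,
      e1 (LinearMap.lTensor (R ⧸ I) d2 z) = quotMap I d2 (e2 z) := by
    intro z
    have := LinearMap.congr_fun (quotEquiv_natural I d2) z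
    simpa using this
  have hg1ψ : ∀ x : ↥Z1pre, ψ₀ x ∈ LinearMap.ker (LinearMap.lTensor (R ⧸ I) d1) := by
    intro x
    rw [LinearMap.mem_ker]
    apply e0.injective
    rw [map_zero, nat1, hψ₀x, e1.apply_symm_apply]
    show Submodule.mapQ _ _ d1 _ (Submodule.Quotient.mk (x : P1)) = 0
    rw [Submodule.mapQ_apply, Submodule.Quotient.mk_eq_zero]
    exact x.2
  let ψ : ↥Z1pre →ₗ[R] ↥(LinearMap.ker (LinearMap.lTensor (R ⧸ I) d1)) :=
    LinearMap.codRestrict _ ψ₀ hg1ψ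
  have hψsurj : Function.Surjective ψ := by
    rintro ⟨z, hz⟩
    obtain ⟨x, hx⟩ := Submodule.Quotient.mk_surjective _ (e1 z)
    have hq1 : quotMap I d1 (e1 z) = 0 := by
      rw [← nat1, LinearMap.mem_ker.mp hz, map_zero]
    have hxZ : x ∈ Z1pre := by
      rw [hZ1pre, Submodule.mem_comap, ← Submodule.Quotient.mk_eq_zero]
      have : quotMap I d1 (Submodule.Quotient.mk x) = Submodule.Quotient.mk (d1 x) := by
        show Submodule.mapQ _ _ d1 _ (Submodule.Quotient.mk x) = _
        rw [Submodule.mapQ_apply]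
      rw [← this, hx, hq1]
    refine ⟨⟨x, hxZ⟩, ?_⟩
    apply Subtype.ext
    show ψ₀ ⟨x, hxZ⟩ = z
    rw [hψ₀x]
    apply e1.injective
    rw [e1.apply_symm_apply]
    exact hx
  let Φ : ↥Z1pre →ₗ[R]
      (↥(LinearMap.ker (LinearMap.lTensor (R ⧸ I) d1)) ⧸ LinearMap.range q) :=
    (LinearMap.range q).mkQ ∘ₗ ψ
  have hΦsurj : Function.Surjective Φ := (Submodule.mkQ_surjective _).comp hψsurj
  have hkerΦ : LinearMap.ker Φ = LinearMap.ker φ := by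
    ext x
    have lhs : Φ x = 0 ↔ ψ₀ x ∈ LinearMap.range (LinearMap.lTensor (R ⧸ I) d2) := by
      rw [show Φ x = Submodule.mkQ _ (ψ x) from rfl, Submodule.mkQ_apply,
        Submodule.Quotient.mk_eq_zero, ← hq]
      constructor
      · intro h
        exact ⟨ψ x, h, rfl⟩
      · rintro ⟨y, hy, hval⟩
        have : y = ψ x := Subtype.ext hval
        rwa [← this]
    have rhs : φ x = 0 ↔ (x : P1) ∈ Bpre := by
      rw [← hkerφ x]
      constructor
      · intro h
        have := congrArg (Subtype.val) h
        exact this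
      · intro h
        exact Subtype.ext h
    have mid : ψ₀ x ∈ LinearMap.range (LinearMap.lTensor (R ⧸ I) d2) ↔ (x : P1) ∈ Bpre := by
      constructor
      · rintro ⟨w, hw⟩
        obtain ⟨y, hy⟩ := Submodule.Quotient.mk_surjective _ (e2 w)
        have he1 : (Submodule.Quotient.mk (x : P1) : P1 ⧸ I • (⊤ : Submodule R P1))
            = Submodule.Quotient.mk (d2 y) := by
          have h1' : e1 (ψ₀ x) = Submodule.Quotient.mk (x : P1) := by
            rw [hψ₀x, e1.apply_symm_apply]
          have h2' : e1 (LinearMap.lTensor (R ⧸ I) d2 w) = Submodule.Quotient.mk (d2 y) := by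
            rw [nat2, ← hy]
            show Submodule.mapQ _ _ d2 _ (Submodule.Quotient.mk y) = _
            rw [Submodule.mapQ_apply]
          rw [← h1', ← h2', hw]
        have hsub : (x : P1) - d2 y ∈ I • (⊤ : Submodule R P1) :=
          (Submodule.Quotient.eq _).mp he1
        rw [hBpre]
        have : (x : P1) = d2 y + ((x : P1) - d2 y) := by abel
        rw [this]
        exact Submodule.add_mem_sup (LinearMap.mem_range_self _ y) hsub
      · intro hx
        rw [hBpre] at hx
        obtain ⟨a, ha, b, hb, hab⟩ := Submodule.mem_sup.mp hx
        obtain ⟨y, hy⟩ := ha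
        refine ⟨e2.symm (Submodule.Quotient.mk y), ?_⟩
        apply e1.injective
        rw [nat2, e2.apply_symm_apply, hψ₀x, e1.apply_symm_apply]
        show Submodule.mapQ _ _ d2 _ (Submodule.Quotient.mk y) = _
        rw [Submodule.mapQ_apply, hy]
        rw [← hab, Submodule.Quotient.mk_add]
        have : (Submodule.Quotient.mk b : P1 ⧸ I • (⊤ : Submodule R P1)) = 0 :=
          (Submodule.Quotient.mk_eq_zero _).mpr hb
        rw [this, add_zero]
    rw [LinearMap.mem_ker, LinearMap.mem_ker, lhs, rhs, mid]
  have E1 := Φ.quotKerEquivOfSurjective hΦsurj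
  have E2 := Submodule.quotEquivOfEq _ _ hkerΦ
  have E3 := φ.quotKerEquivOfSurjective hφsurj
  exact ⟨(E1.symm.trans E2).trans E3⟩

end Key


lemma killed_by_nzd {R : Type u} [CommRing R] {M : Type u} [AddCommGroup M] [Module R M]
    (hQ : Module.Flat (FractionRing R) (FractionRing R ⊗[R] M)) (I : Ideal R)
    (x : ↥I ⊗[R] M) (hx : LinearMap.rTensor M I.subtype x = 0) :
    ∃ s : nonZeroDivisors R, (s : R) • x = 0 := by
  set Q := FractionRing R with hQdef
  haveI hflatQ : Module.Flat R Q := IsLocalization.flat Q (nonZeroDivisors R)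
  haveI : Module.Flat R (Q ⊗[R] M) := Module.Flat.trans R Q (Q ⊗[R] M)
  let g : M →ₗ[R] Q ⊗[R] M := TensorProduct.mk R Q M 1
  have hcomm : LinearMap.rTensor (Q ⊗[R] M) I.subtype ∘ₗ LinearMap.lTensor ↥I g
      = LinearMap.lTensor R g ∘ₗ LinearMap.rTensor M I.subtype := by
    apply TensorProduct.ext'
    intro a m
    simp
  have h1 : LinearMap.rTensor (Q ⊗[R] M) I.subtype (LinearMap.lTensor ↥I g x) = 0 := by
    rw [← LinearMap.comp_apply, hcomm, LinearMap.comp_apply, hx, map_zero]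
  have hinj := (Module.Flat.iff_rTensor_injective' (M := Q ⊗[R] M)).mp inferInstance I
  have h2 : LinearMap.lTensor ↥I g x = 0 := by
    apply hinj
    rw [h1, map_zero]
  have hcl : (TensorProduct.leftComm R ↥I Q M).toLinearMap ∘ₗ LinearMap.lTensor ↥I g
      = TensorProduct.mk R Q (↥I ⊗[R] M) 1 := by
    apply TensorProduct.ext'
    intro a m
    simp [g, TensorProduct.leftComm_tmul]
  have h3 : (TensorProduct.mk R Q (↥I ⊗[R] M)) 1 x = 0 := by
    rw [← hcl, LinearMap.comp_apply, h2, map_zero]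
  haveI : IsLocalizedModule (nonZeroDivisors R) (TensorProduct.mk R Q (↥I ⊗[R] M) 1) :=
    (isLocalizedModule_iff_isBaseChange (nonZeroDivisors R) Q _).mpr
      (TensorProduct.isBaseChange R (↥I ⊗[R] M) Q)
  obtain ⟨s, hs⟩ := (IsLocalizedModule.eq_zero_iff (nonZeroDivisors R) _).mp h3
  exact ⟨s, hs⟩


open CategoryTheory

theorem stmt_9 {R : Type u} [CommRing R] (M : Type u) [AddCommGroup M] [Module R M]
    (hQ : Module.Flat (FractionRing R) (FractionRing R ⊗[R] M))
    (hTor : ∀ I : Ideal R, I.FG →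
      TorsionFree R (((Tor (ModuleCat.{u} R) 1).obj (ModuleCat.of R (R ⧸ I))).obj
        (ModuleCat.of R M))) :
    Module.Flat R M := by
  rw [Module.Flat.iff_rTensor_injective]
  intro I hI
  rw [injective_iff_map_eq_zero]
  intro x hx
  obtain ⟨s, hs⟩ := killed_by_nzd hQ I x hx
  let F := (MonoidalCategory.tensoringLeft (ModuleCat.{u} R)).obj (ModuleCat.of R (R ⧸ I))
  let P : ProjectiveResolution (ModuleCat.of R M) := ProjectiveResolution.of _
  let C := (F.mapHomologicalComplex (ComplexShape.down ℕ)).obj P.complex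
  let S : ShortComplex (ModuleCat.{u} R) := C.sc' 2 1 0
  let isoT : (((Tor (ModuleCat.{u} R) 1).obj (ModuleCat.of R (R ⧸ I))).obj (ModuleCat.of R M))
      ≅ S.moduleCatLeftHomologyData.H :=
    (P.isoLeftDerivedObj F 1) ≪≫ (C.homologyIsoSc' 2 1 0 (by simp) (by simp)) ≪≫
      S.moduleCatHomologyIso
  let ε : ↑(P.complex.X 0) →ₗ[R] M := (P.π.f 0).hom
  have hε : Function.Surjective ε := by
    have := (ModuleCat.epi_iff_surjective (P.π.f 0)).mp inferInstance
    exact this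
  have h0 : LinearMap.range (P.complex.d 1 0).hom = LinearMap.ker ε :=
    P.exact₀.moduleCat_range_eq_ker
  have h1 : LinearMap.range (P.complex.d 2 1).hom = LinearMap.ker (P.complex.d 1 0).hom := by
    have hex := (HomologicalComplex.exactAt_iff' P.complex 2 1 0 (by simp) (by simp)).mp
      (P.complex_exactAt_succ 0)
    exact hex.moduleCat_range_eq_ker
  haveI hproj : Module.Projective R ↑(P.complex.X 0) := by
    rw [IsProjective.iff_projective]
    show Projective (ModuleCat.of R ↑(P.complex.X 0))
    rw [ModuleCat.of_coe]
    exact P.projective 0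
  have hflat : Module.Flat R ↑(P.complex.X 0) := inferInstance
  have hq' : Submodule.map
        (LinearMap.ker (LinearMap.lTensor (R ⧸ I) (P.complex.d 1 0).hom)).subtype
        (LinearMap.range (S.moduleCatToCycles :
          ↑S.X₁ →ₗ[R] ↥(LinearMap.ker (LinearMap.lTensor (R ⧸ I) (P.complex.d 1 0).hom))))
      = LinearMap.range (LinearMap.lTensor (R ⧸ I) (P.complex.d 2 1).hom) := by
    refine (LinearMap.range_comp _ _).symm.trans ?_
    have : (LinearMap.ker (LinearMap.lTensor (R ⧸ I) (P.complex.d 1 0).hom)).subtype ∘ₗ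
        S.moduleCatToCycles = LinearMap.lTensor (R ⧸ I) (P.complex.d 2 1).hom := by
      ext z
      rfl
    exact congrArg LinearMap.range this
  obtain ⟨eqv⟩ := key_equiv I hflat (P.complex.d 2 1).hom (P.complex.d 1 0).hom ε hε h0 h1
    S.moduleCatToCycles hq'
  let eqT := isoT.toLinearEquiv.trans eqv
  have hTF := hTor I hI
  let xK : ↥(LinearMap.ker (LinearMap.rTensor M I.subtype)) := ⟨x, hx⟩
  have hsx : (s : R) • xK = 0 := Subtype.ext (by simpa using hs)
  have hz : eqT.symm xK = 0 :=
    hTF s s.2 (eqT.symm xK) (by rw [← map_smul, hsx, map_zero])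
  have hxK : xK = 0 := by rw [← eqT.apply_symm_apply xK, hz, map_zero]
  simpa [xK, Subtype.ext_iff] using hxK
end

section
/- Let R be a commutative ring and M a flat R-module. Then sK_R(L ⊗_R M) ⊆ sK_R(L) for every R-module L. -/
open TensorProduct

universe u v

private lemma aux_rep {R : Type u} [CommRing R] {M : Type*} [AddCommGroup M] [Module R M]
    [Module.Flat R M] :
    ∀ (as : List R) (L : Type v) [AddCommGroup L] [Module R L] (z : L ⊗[R] M),
      (∀ a ∈ as, a • z = 0) →
      ∃ (n : ℕ) (l : Fin n → L) (m : Fin n → M),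
        z = ∑ i, l i ⊗ₜ[R] m i ∧ ∀ i, ∀ a ∈ as, a • l i = 0 := by
  intro as
  induction as with
  | nil =>
    intro L _ _ z _
    obtain ⟨S, hS⟩ := TensorProduct.exists_finset z
    refine ⟨S.card, fun i => (S.equivFin.symm i).1.1, fun i => (S.equivFin.symm i).1.2, ?_,
      fun i a ha => by simp at ha⟩
    rw [hS, ← Finset.sum_coe_sort]
    exact Fintype.sum_equiv S.equivFin _ _ (fun p => by simp)
  | cons a rest ih =>
    intro L _ _ z hz
    set f : L →ₗ[R] L := a • LinearMap.id with hf
    set N := LinearMap.ker f with hN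
    have hexact := Module.Flat.rTensor_exact (M := M) (LinearMap.exact_subtype_ker_map f)
    have hfz : f.rTensor M z = 0 := by
      have hfeq : f.rTensor M = a • LinearMap.id := by
        apply TensorProduct.ext'
        intro x y
        simp [hf, smul_tmul']
      rw [hfeq]
      simpa using hz a List.mem_cons_self
    obtain ⟨w, hw⟩ := (hexact z).mp hfz
    have hinj : Function.Injective (N.subtype.rTensor M) :=
      Module.Flat.rTensor_preserves_injective_linearMap _ N.injective_subtype
    have hw' : ∀ b ∈ rest, b • w = 0 := by
      intro b hb
      apply hinj
      rw [map_smul, hw, map_zero]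
      exact hz b (List.mem_cons_of_mem a hb)
    obtain ⟨n, l, m, hsum, hkill⟩ := ih N w hw'
    refine ⟨n, fun i => (l i : L), m, ?_, ?_⟩
    · rw [← hw, hsum, map_sum]
      simp
    · intro i b hb
      rcases List.mem_cons.mp hb with rfl | hb
      · have : f (l i) = 0 := LinearMap.mem_ker.mp (l i).2
        exact this
      · have : ((b • l i : N) : L) = 0 := by rw [hkill i b hb]; rfl
        simpa using this

theorem stmt_10 {R : Type*} [CommRing R] {M : Type*} [AddCommGroup M] [Module R M]
    [Module.Flat R M] (L : Type*) [AddCommGroup L] [Module R L] (p : Ideal R) :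
    IsStrongKrullPrime R (L ⊗[R] M) p → IsStrongKrullPrime R L p := by
  rintro ⟨hp, h⟩
  refine ⟨hp, ?_⟩
  intro I hI hIp
  obtain ⟨T, hT⟩ := hI
  obtain ⟨z, hz1, hz2⟩ := h I ⟨T, hT⟩ hIp
  have hza : ∀ a ∈ T.toList, a • z = 0 := by
    intro a ha
    have haI : a ∈ I := hT ▸ Submodule.subset_span (by simpa using ha)
    simpa [LinearMap.mem_ker, LinearMap.toSpanSingleton_apply] using hz1 haI
  obtain ⟨n, l, m, hsum, hkill⟩ := aux_rep T.toList L z hza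
  have hex : ∃ i, LinearMap.ker (LinearMap.toSpanSingleton R L (l i)) ≤ p := by
    by_contra hc
    push_neg at hc
    have hc' : ∀ i, ∃ r, r • l i = 0 ∧ r ∉ p := by
      intro i
      obtain ⟨r, hr1, hr2⟩ := SetLike.not_le_iff_exists.mp (hc i)
      exact ⟨r, by simpa [LinearMap.mem_ker, LinearMap.toSpanSingleton_apply] using hr1, hr2⟩
    choose r hr1 hr2 using hc'
    have hprod : (∏ i, r i) • z = 0 := by
      rw [hsum, Finset.smul_sum]
      apply Finset.sum_eq_zero
      intro i _
      rw [smul_tmul', ← Finset.prod_erase_mul _ _ (Finset.mem_univ i), mul_smul, hr1, smul_zero,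
        zero_tmul]
    have hmem : (∏ i, r i) ∈ p :=
      hz2 (by simpa [LinearMap.mem_ker, LinearMap.toSpanSingleton_apply] using hprod)
    obtain ⟨i, _, hip⟩ := (Ideal.IsPrime.prod_mem_iff (hp := hp)).mp hmem
    exact hr2 i hip
  obtain ⟨i, hi⟩ := hex
  refine ⟨l i, ?_, hi⟩
  rw [← hT, Ideal.span_le]
  intro a ha
  simp only [SetLike.mem_coe, LinearMap.mem_ker, LinearMap.toSpanSingleton_apply]
  exact hkill i a (by simpa using ha)
end

section
/- Let R be a commutative ring and M a faithfully flat R-module. Then sK_R(L ⊗_R M) = sK_R(L) for every R-module L. -/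
open TensorProduct

set_option maxHeartbeats 1000000 in
set_option synthInstance.maxHeartbeats 800000 in
/-- Auxiliary: over a faithfully flat module, an element with annihilator inside `p`
gives rise to a pure tensor whose annihilator is inside `p`. -/
lemma exists_tensor_ann_le {R : Type*} [CommRing R] {M : Type*} [AddCommGroup M] [Module R M]
    [Module.FaithfullyFlat R M] {L : Type*} [AddCommGroup L] [Module R L] {p : Ideal R}
    (hp : p.IsPrime) (z : L) (hzp : LinearMap.ker (LinearMap.toSpanSingleton R L z) ≤ p) :
    ∃ m : M, ∀ s : R, s • (z ⊗ₜ[R] m) = 0 → s ∈ p := by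
  set J : Ideal R := LinearMap.ker (LinearMap.toSpanSingleton R L z) with hJ
  by_contra hc
  push_neg at hc
  set Rp := Localization.AtPrime p with hRp
  set N := Rp ⧸ (J.map (algebraMap R Rp)) with hN
  have halg : ∀ x : R, algebraMap R N x
      = Ideal.Quotient.mk (J.map (algebraMap R Rp)) (algebraMap R Rp x) := fun _ => rfl
  -- the induced injection R/J → L
  set φ : (R ⧸ J) →ₗ[R] L := J.liftQ (LinearMap.toSpanSingleton R L z) le_rfl with hφ
  have hφinj : Function.Injective φ := by
    rw [← LinearMap.ker_eq_bot, hφ, Submodule.ker_liftQ_eq_bot' J _ rfl]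
  -- the map R/J → N
  have hJker : J ≤ LinearMap.ker ((Algebra.linearMap R N)) := by
    intro x hx
    rw [LinearMap.mem_ker, Algebra.linearMap_apply, halg,
      Ideal.Quotient.eq_zero_iff_mem]
    exact Ideal.mem_map_of_mem _ hx
  set ψ : (R ⧸ J) →ₗ[R] N := J.liftQ (Algebra.linearMap R N) hJker with hψ
  -- every element 1 ⊗ m of N ⊗ M vanishes
  have h1 : ∀ m : M, ((1 : N) ⊗ₜ[R] m : N ⊗[R] M) = 0 := by
    intro m
    obtain ⟨s, hs0, hsp⟩ := hc m
    -- s • (1 ⊗ m) = 0 in (R/J) ⊗ M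
    have step1 : s • ((Ideal.Quotient.mk J 1) ⊗ₜ[R] m : (R ⧸ J) ⊗[R] M) = 0 := by
      apply Module.Flat.rTensor_preserves_injective_linearMap φ hφinj
      rw [map_smul, map_zero, LinearMap.rTensor_tmul]
      have : φ (Ideal.Quotient.mk J 1) = z := by
        show φ (Submodule.Quotient.mk (1 : R)) = z
        rw [hφ, Submodule.liftQ_apply, LinearMap.toSpanSingleton_apply, one_smul]
      rw [this]
      exact hs0
    -- push it to N ⊗ M
    have step2 : s • ((1 : N) ⊗ₜ[R] m : N ⊗[R] M) = 0 := by
      have := congrArg (ψ.rTensor M) step1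
      rw [map_smul, map_zero, LinearMap.rTensor_tmul] at this
      have hψ1 : ψ (Ideal.Quotient.mk J 1) = 1 := by
        show ψ (Submodule.Quotient.mk (1 : R)) = 1
        rw [hψ, Submodule.liftQ_apply, Algebra.linearMap_apply, map_one]
      rwa [hψ1] at this
    -- s acts invertibly on N ⊗ M
    have hu : IsUnit (algebraMap R N s) := by
      rw [halg]
      exact (IsLocalization.map_units Rp (⟨s, hsp⟩ : p.primeCompl)).map
        (Ideal.Quotient.mk _)
    have step3 : (algebraMap R N s) • ((1 : N) ⊗ₜ[R] m : N ⊗[R] M) = 0 := by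
      rwa [algebraMap_smul]
    exact hu.smul_eq_zero.mp step3
  -- hence N ⊗ M is trivial
  have hsub : Subsingleton (N ⊗[R] M) := by
    refine subsingleton_of_forall_eq 0 fun x => ?_
    induction x with
    | zero => rfl
    | tmul q m =>
      calc (q ⊗ₜ[R] m : N ⊗[R] M) = q • ((1 : N) ⊗ₜ[R] m) := by
            rw [TensorProduct.smul_tmul', smul_eq_mul, mul_one]
        _ = 0 := by rw [h1, smul_zero]
    | add x y ihx ihy => rw [ihx, ihy, add_zero]
  -- faithful flatness gives N trivial
  haveI := hsub
  haveI : Subsingleton N := Module.FaithfullyFlat.rTensor_reflects_triviality R M N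
  -- but N is nontrivial
  have hne : J.map (algebraMap R Rp) ≠ ⊤ := by
    intro htop
    have hle : J.map (algebraMap R Rp) ≤ p.map (algebraMap R Rp) := Ideal.map_mono hzp
    rw [htop, Localization.AtPrime.map_eq_maximalIdeal] at hle
    exact (IsLocalRing.maximalIdeal.isMaximal _).ne_top (top_le_iff.mp hle)
  haveI := Ideal.Quotient.nontrivial_iff.mpr hne
  exact false_of_nontrivial_of_subsingleton N

theorem stmt_11 {R : Type*} [CommRing R] {M : Type*} [AddCommGroup M] [Module R M]
    [Module.FaithfullyFlat R M] (L : Type*) [AddCommGroup L] [Module R L] (p : Ideal R) :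
    IsStrongKrullPrime R (L ⊗[R] M) p ↔ IsStrongKrullPrime R L p := by
  constructor
  · -- forward direction: only flatness needed
    rintro ⟨hp, h⟩
    refine ⟨hp, fun I hI hIp => ?_⟩
    obtain ⟨t, htI, htp⟩ := h I hI hIp
    obtain ⟨S, hS⟩ := hI
    -- work in M ⊗ L
    set t' : M ⊗[R] L := TensorProduct.comm R L M t with ht'
    classical
    set f : L →ₗ[R] ({a : R // a ∈ S} → L) :=
      LinearMap.pi (fun i => ((i : R) • LinearMap.id)) with hf
    have hker : ∀ z : L, z ∈ LinearMap.ker f →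
        I ≤ LinearMap.ker (LinearMap.toSpanSingleton R L z) := by
      intro z hz
      rw [← hS, Ideal.span_le]
      intro a ha
      have := congrFun (LinearMap.mem_ker.mp hz) ⟨a, ha⟩
      simpa [hf, LinearMap.mem_ker, LinearMap.toSpanSingleton_apply] using this
    -- compute : (f.lTensor M) t' = 0
    have hft : (f.lTensor M) t' = 0 := by
      apply (TensorProduct.piRight R R M (fun _ : {a : R // a ∈ S} => L)).injective
      rw [map_zero]
      ext i
      have hcomp : (LinearMap.proj i).comp
          (((TensorProduct.piRightHom R R M (fun _ : {a : R // a ∈ S} => L))).comp (f.lTensor M))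
          = ((i : R) • LinearMap.id : M ⊗[R] L →ₗ[R] M ⊗[R] L) := by
        apply TensorProduct.ext'
        intro m l
        simp [hf, TensorProduct.tmul_smul]
      have h1 : (TensorProduct.piRight R R M fun _ : {a : R // a ∈ S} => L) ((f.lTensor M) t') i
          = (i : R) • t' := by
        rw [TensorProduct.piRight_apply]
        simpa using LinearMap.congr_fun hcomp t'
      rw [h1]
      have hiI : (i : R) ∈ I := by rw [← hS]; exact Submodule.subset_span (by simp)
      have : (i : R) • t = 0 := htI hiI
      simp [ht', ← map_smul, this]
    -- use exactness to pull back t'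
    have hex : Function.Exact ((LinearMap.ker f).subtype.lTensor M) (f.lTensor M) :=
      Module.Flat.lTensor_exact M (LinearMap.exact_subtype_ker_map f)
    obtain ⟨u, hu⟩ := (hex t').mp hft
    -- now find the witness
    by_contra hc
    push_neg at hc
    have main : ∀ v : M ⊗[R] (LinearMap.ker f),
        ∃ s : R, s ∉ p ∧ s • (((LinearMap.ker f).subtype.lTensor M) v) = 0 := by
      intro v
      induction v with
      | zero => exact ⟨1, fun h1 => hp.ne_top (Ideal.eq_top_of_isUnit_mem _ h1 isUnit_one),
          by simp⟩
      | tmul m k =>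
        obtain ⟨s, hs, hsp⟩ := (SetLike.not_le_iff_exists.mp
          (hc (k : L) (hker _ k.2)) : ∃ s ∈ _, s ∉ p)
        refine ⟨s, hsp, ?_⟩
        have hk : s • (k : L) = 0 := hs
        rw [LinearMap.lTensor_tmul, ← TensorProduct.tmul_smul]
        rw [show s • (LinearMap.ker f).subtype k = 0 from hk, TensorProduct.tmul_zero]
      | add v w ihv ihw =>
        obtain ⟨s₁, hs₁, he₁⟩ := ihv
        obtain ⟨s₂, hs₂, he₂⟩ := ihw
        refine ⟨s₁ * s₂, fun hm => ((hp.mem_or_mem hm).elim hs₁ hs₂), ?_⟩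
        rw [map_add, smul_add]
        calc (s₁ * s₂) • ((LinearMap.ker f).subtype.lTensor M) v
              + (s₁ * s₂) • ((LinearMap.ker f).subtype.lTensor M) w
            = s₂ • (s₁ • ((LinearMap.ker f).subtype.lTensor M) v)
              + s₁ • (s₂ • ((LinearMap.ker f).subtype.lTensor M) w) := by
              rw [smul_smul, smul_smul, mul_comm s₁ s₂]
          _ = 0 := by rw [he₁, he₂, smul_zero, smul_zero, add_zero]
    obtain ⟨s, hsp, hst⟩ := main u
    rw [hu] at hst
    have hst0 : s • t = 0 := by
      apply (TensorProduct.comm R L M).injective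
      rw [map_smul, map_zero]
      exact hst
    exact hsp (htp hst0)
  · -- backward direction: faithful flatness
    rintro ⟨hp, h⟩
    refine ⟨hp, fun I hI hIp => ?_⟩
    obtain ⟨z, hzI, hzp⟩ := h I hI hIp
    set J : Ideal R := LinearMap.ker (LinearMap.toSpanSingleton R L z) with hJ
    have key := exists_tensor_ann_le (M := M) hp z hzp
    obtain ⟨m, hm⟩ := key
    refine ⟨z ⊗ₜ[R] m, ?_, ?_⟩
    · intro a ha
      rw [LinearMap.mem_ker, LinearMap.toSpanSingleton_apply, TensorProduct.smul_tmul',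
        show a • z = 0 from hzI ha, TensorProduct.zero_tmul]
    · intro s hs
      exact hm s (by simpa [LinearMap.toSpanSingleton_apply] using hs)
end

section
/- Let φ: R → S be a ring homomorphism, L an R-module, and M an S-module that is flat as an R-module. Then for every p ∈ sK_R(L) and every Q ∈ sK_S(M/pM), one has Q ∈ sK_S(L ⊗_R M). -/
open TensorProduct

section Helpers

variable {R S : Type*} [CommRing R] [CommRing S] [Algebra R S]

/-- If `m ⊗ y = 0` in `M ⊗[R] L` with `M` flat, then `m ∈ Ann(y) • M`. -/
lemma mem_ann_smul_of_tmul_eq_zero {L M : Type*} [AddCommGroup L] [Module R L]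
    [AddCommGroup M] [Module R M] [Module.Flat R M] (y : L) (m : M)
    (h : m ⊗ₜ[R] y = 0) :
    m ∈ (LinearMap.ker (LinearMap.toSpanSingleton R L y) • (⊤ : Submodule R M)) := by
  set a := LinearMap.ker (LinearMap.toSpanSingleton R L y) with ha
  let ι : (R ⧸ a) →ₗ[R] L := a.liftQ (LinearMap.toSpanSingleton R L y) le_rfl
  have hι : Function.Injective ι := by
    rw [← LinearMap.ker_eq_bot]
    exact Submodule.ker_liftQ_eq_bot _ _ _ le_rfl
  have hinj : Function.Injective (ι.lTensor M) :=
    Module.Flat.lTensor_preserves_injective_linearMap ι hι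
  have hιy : ι (Ideal.Quotient.mk a 1) = y := by
    exact one_smul R y
  have h1 : (ι.lTensor M) (m ⊗ₜ (Ideal.Quotient.mk a 1)) = 0 := by
    rw [LinearMap.lTensor_tmul, hιy]; exact h
  have h2 : m ⊗ₜ[R] (Ideal.Quotient.mk a 1) = (0 : M ⊗[R] (R ⧸ a)) := by
    apply hinj; simpa using h1
  have h3 := congrArg (TensorProduct.tensorQuotEquivQuotSMul M a) h2
  rw [TensorProduct.tensorQuotEquivQuotSMul_tmul_mk, map_zero, one_smul] at h3
  rwa [Submodule.Quotient.mk_eq_zero] at h3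

lemma mem_map_smul_of_mem_smul {M : Type*} [AddCommGroup M] [Module S M] [Module R M]
    [IsScalarTower R S M] {I J : Ideal R} (hIJ : I ≤ J) {m : M}
    (h : m ∈ (I • (⊤ : Submodule R M))) :
    m ∈ (J.map (algebraMap R S) • (⊤ : Submodule S M)) := by
  refine Submodule.smul_induction_on h ?_ ?_
  · intro r hr n _
    rw [← algebraMap_smul S r n]
    exact Submodule.smul_mem_smul (Ideal.mem_map_of_mem _ (hIJ hr)) trivial
  · intro x y hx hy
    exact Submodule.add_mem _ hx hy

lemma exists_fg_of_mem_map_smul {M : Type*} [AddCommGroup M] [Module S M] [Module R M]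
    [IsScalarTower R S M] {p : Ideal R} {m : M}
    (h : m ∈ (p.map (algebraMap R S) • (⊤ : Submodule S M))) :
    ∃ I : Ideal R, I.FG ∧ I ≤ p ∧ m ∈ (I.map (algebraMap R S) • (⊤ : Submodule S M)) := by
  refine Submodule.smul_induction_on h ?_ ?_
  · intro x hx n _
    have key : ∀ n : M, ∃ I : Ideal R, I.FG ∧ I ≤ p ∧
        x • n ∈ (I.map (algebraMap R S) • (⊤ : Submodule S M)) := by
      refine Submodule.span_induction ?_ ?_ ?_ ?_ hx
      · rintro _ ⟨r, hr, rfl⟩ n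
        refine ⟨Ideal.span {r}, Submodule.fg_span (Set.finite_singleton r),
          (Ideal.span_singleton_le_iff_mem p).mpr hr, ?_⟩
        exact Submodule.smul_mem_smul
          (Ideal.mem_map_of_mem _ (Ideal.mem_span_singleton_self r)) trivial
      · intro n
        exact ⟨⊥, Submodule.fg_bot, bot_le, by simp⟩
      · intro x y _ _ hx' hy' n
        obtain ⟨I₁, hI₁fg, hI₁p, hI₁⟩ := hx' n
        obtain ⟨I₂, hI₂fg, hI₂p, hI₂⟩ := hy' n
        refine ⟨I₁ ⊔ I₂, Submodule.FG.sup hI₁fg hI₂fg, sup_le hI₁p hI₂p, ?_⟩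
        rw [add_smul]
        exact Submodule.add_mem _
          (Submodule.smul_mono_left (Ideal.map_mono le_sup_left) hI₁)
          (Submodule.smul_mono_left (Ideal.map_mono le_sup_right) hI₂)
      · intro s x _ hx' n
        obtain ⟨I, hIfg, hIp, hI⟩ := hx' n
        refine ⟨I, hIfg, hIp, ?_⟩
        rw [smul_eq_mul, mul_smul]
        exact Submodule.smul_mem _ s hI
    exact key n
  · intro x y hx hy
    obtain ⟨I₁, hI₁fg, hI₁p, hI₁⟩ := hx
    obtain ⟨I₂, hI₂fg, hI₂p, hI₂⟩ := hy
    refine ⟨I₁ ⊔ I₂, Submodule.FG.sup hI₁fg hI₂fg, sup_le hI₁p hI₂p, ?_⟩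
    exact Submodule.add_mem _
      (Submodule.smul_mono_left (Ideal.map_mono le_sup_left) hI₁)
      (Submodule.smul_mono_left (Ideal.map_mono le_sup_right) hI₂)

lemma tmul_eq_zero_of_mem_map_smul {L M : Type*} [AddCommGroup L] [Module R L]
    [AddCommGroup M] [Module S M] [Module R M] [IsScalarTower R S M]
    {I : Ideal R} {y : L} (hIy : I ≤ LinearMap.ker (LinearMap.toSpanSingleton R L y))
    {m : M} (h : m ∈ (I.map (algebraMap R S) • (⊤ : Submodule S M))) :
    m ⊗ₜ[R] y = 0 := by
  refine Submodule.smul_induction_on h ?_ ?_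
  · intro x hx n _
    have key : ∀ n : M, (x • n) ⊗ₜ[R] y = 0 := by
      refine Submodule.span_induction ?_ ?_ ?_ ?_ hx
      · rintro _ ⟨r, hr, rfl⟩ n
        have hry : r • y = 0 := hIy hr
        rw [algebraMap_smul, TensorProduct.smul_tmul, hry, TensorProduct.tmul_zero]
      · intro n; simp
      · intro x y' _ _ hx' hy' n
        rw [add_smul, TensorProduct.add_tmul, hx' n, hy' n, add_zero]
      · intro s x _ hx' n
        rw [smul_eq_mul, mul_smul, ← TensorProduct.smul_tmul', hx' n, smul_zero]
    exact key n
  · intro x y' hx hy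
    rw [TensorProduct.add_tmul, hx, hy, add_zero]

end Helpers

theorem stmt_12 {R S : Type*} [CommRing R] [CommRing S] [Algebra R S]
    (L : Type*) [AddCommGroup L] [Module R L]
    (M : Type*) [AddCommGroup M] [Module S M] [Module R M] [IsScalarTower R S M]
    [Module.Flat R M]
    (p : Ideal R) (hp : IsStrongKrullPrime R L p) (Q : Ideal S)
    (hQ : IsStrongKrullPrime S (M ⧸ (p.map (algebraMap R S) • (⊤ : Submodule S M))) Q) :
    IsStrongKrullPrime S (M ⊗[R] L) Q := by
  refine ⟨hQ.1, fun J hJfg hJQ => ?_⟩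
  obtain ⟨zbar, hJz, hzQ⟩ := hQ.2 J hJfg hJQ
  obtain ⟨z, rfl⟩ := Submodule.Quotient.mk_surjective _ zbar
  obtain ⟨T, hT⟩ := hJfg
  -- For each s ∈ T, s • z ∈ pM, extract a f.g. ideal
  have hmem : ∀ s ∈ T, s • z ∈ (p.map (algebraMap R S) • (⊤ : Submodule S M)) := by
    intro s hs
    have hsJ : s ∈ J := hT ▸ Ideal.subset_span hs
    have := hJz hsJ
    rw [LinearMap.mem_ker, LinearMap.toSpanSingleton_apply, ← Submodule.Quotient.mk_smul,
      Submodule.Quotient.mk_eq_zero] at this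
    exact this
  have hchoice : ∀ s : S, ∃ I : Ideal R, I.FG ∧ I ≤ p ∧
      (s ∈ T → s • z ∈ (I.map (algebraMap R S) • (⊤ : Submodule S M))) := by
    intro s
    by_cases hs : s ∈ T
    · obtain ⟨I, h1, h2, h3⟩ := exists_fg_of_mem_map_smul (hmem s hs)
      exact ⟨I, h1, h2, fun _ => h3⟩
    · exact ⟨⊥, Submodule.fg_bot, bot_le, fun h => absurd h hs⟩
  choose f hf1 hf2 hf3 using hchoice
  set I : Ideal R := T.sup f with hI
  have hIfg : I.FG := Submodule.fg_finset_sup T f (fun s _ => hf1 s)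
  have hIp : I ≤ p := Finset.sup_le (fun s _ => hf2 s)
  obtain ⟨y, hIy, hyp⟩ := hp.2 I hIfg hIp
  refine ⟨z ⊗ₜ[R] y, ?_, ?_⟩
  · -- J ≤ Ann(z ⊗ y)
    rw [← hT, Ideal.span_le]
    intro s hs
    rw [SetLike.mem_coe, LinearMap.mem_ker, LinearMap.toSpanSingleton_apply,
      TensorProduct.smul_tmul']
    exact tmul_eq_zero_of_mem_map_smul (S := S) hIy
      (Submodule.smul_mono_left (Ideal.map_mono (Finset.le_sup hs)) (hf3 s hs))
  · -- Ann(z ⊗ y) ≤ Q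
    intro s hs
    rw [LinearMap.mem_ker, LinearMap.toSpanSingleton_apply, TensorProduct.smul_tmul'] at hs
    have h1 : s • z ∈ (LinearMap.ker (LinearMap.toSpanSingleton R L y) •
        (⊤ : Submodule R M)) := mem_ann_smul_of_tmul_eq_zero y (s • z) hs
    have h2 : s • z ∈ (p.map (algebraMap R S) • (⊤ : Submodule S M)) :=
      mem_map_smul_of_mem_smul hyp h1
    apply hzQ
    rw [LinearMap.mem_ker, LinearMap.toSpanSingleton_apply, ← Submodule.Quotient.mk_smul,
      Submodule.Quotient.mk_eq_zero]
    exact h2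
end

section
/- Let φ: R → S be a ring homomorphism, M an R-flat S-module, u ∈ L an element of an R-module L, and t ∈ M. Then the S-ideal ((Ann_R(u)·M) :_S t) equals the annihilator Ann_S(u ⊗ t) of the element u ⊗ t of the S-module L ⊗_R M. -/
open TensorProduct

theorem stmt_13 {R S : Type*} [CommRing R] [CommRing S] [Algebra R S]
    (L : Type*) [AddCommGroup L] [Module R L]
    (M : Type*) [AddCommGroup M] [Module S M] [Module R M] [IsScalarTower R S M]
    [Module.Flat R M] (u : L) (t : M) :
    ((Ideal.map (algebraMap R S) (LinearMap.ker (LinearMap.toSpanSingleton R L u)) •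
        (⊤ : Submodule S M)).colon (Submodule.span S {t})) =
      LinearMap.ker (LinearMap.toSpanSingleton S (M ⊗[R] L) (t ⊗ₜ u)) := by
  set I : Ideal R := LinearMap.ker (LinearMap.toSpanSingleton R L u) with hI
  -- Key: for m : M, m ⊗ u = 0 ↔ m ∈ I • ⊤ (R-submodule)
  have key : ∀ m : M, m ⊗ₜ[R] u = (0 : M ⊗[R] L) ↔ m ∈ (I • ⊤ : Submodule R M) := by
    intro m
    set g : (R ⧸ I) →ₗ[R] L := I.liftQ (LinearMap.toSpanSingleton R L u) le_rfl with hg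
    have hginj : Function.Injective g := by
      rw [← LinearMap.ker_eq_bot, hg, Submodule.ker_liftQ_eq_bot _ _ _ le_rfl]
    have hinj : Function.Injective (LinearMap.lTensor M g) :=
      Module.Flat.lTensor_preserves_injective_linearMap g hginj
    have h1 : (LinearMap.lTensor M g) (m ⊗ₜ (Ideal.Quotient.mk I 1)) = m ⊗ₜ[R] u := by
      rw [LinearMap.lTensor_tmul]
      congr 1
      show (LinearMap.toSpanSingleton R L u) 1 = u
      simp
    constructor
    · intro h0
      have : (LinearMap.lTensor M g) (m ⊗ₜ (Ideal.Quotient.mk I 1)) =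
          (LinearMap.lTensor M g) 0 := by rw [h1, map_zero, h0]
      have h2 := hinj this
      have h3 := congrArg (tensorQuotEquivQuotSMul M I) h2
      rw [map_zero] at h3
      have h4 : tensorQuotEquivQuotSMul M I (m ⊗ₜ (Ideal.Quotient.mk I 1)) =
          Submodule.Quotient.mk m := by
        simp only [tensorQuotEquivQuotSMul, LinearEquiv.trans_apply, TensorProduct.comm_tmul]
        rw [quotTensorEquivQuotSMul_mk_tmul, one_smul]
      rw [h4] at h3
      exact (Submodule.Quotient.mk_eq_zero _).mp h3
    · intro hm
      have h4 : tensorQuotEquivQuotSMul M I (m ⊗ₜ (Ideal.Quotient.mk I 1)) =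
          Submodule.Quotient.mk m := by
        simp only [tensorQuotEquivQuotSMul, LinearEquiv.trans_apply, TensorProduct.comm_tmul]
        rw [quotTensorEquivQuotSMul_mk_tmul, one_smul]
      have h5 : (tensorQuotEquivQuotSMul M I) (m ⊗ₜ (Ideal.Quotient.mk I 1)) = 0 := by
        rw [h4]; exact (Submodule.Quotient.mk_eq_zero _).mpr hm
      have h6 : m ⊗ₜ (Ideal.Quotient.mk I 1) = (0 : M ⊗[R] (R ⧸ I)) :=
        (tensorQuotEquivQuotSMul M I).map_eq_zero_iff.mp h5
      rw [← h1, h6, map_zero]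
  -- Identify the S-submodule (map I) • ⊤ with the R-submodule I • ⊤ as sets
  have mem_eq : ∀ m : M,
      m ∈ (Ideal.map (algebraMap R S) I • (⊤ : Submodule S M)) ↔
      m ∈ (I • ⊤ : Submodule R M) := by
    intro m
    constructor
    · intro hm
      refine Submodule.smul_induction_on hm (fun s hs n _ => ?_)
        (fun x y hx hy => Submodule.add_mem _ hx hy)
      induction hs using Submodule.span_induction generalizing n with
      | mem x hx =>
        obtain ⟨a, ha, rfl⟩ := hx
        rw [algebraMap_smul]
        exact Submodule.smul_mem_smul ha trivial
      | zero => rw [zero_smul]; exact Submodule.zero_mem _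
      | add x y _ _ ihx ihy => rw [add_smul]; exact Submodule.add_mem _ (ihx n trivial) (ihy n trivial)
      | smul s x _ ihx =>
        rw [smul_eq_mul, mul_comm, mul_smul]
        exact ihx (s • n) trivial
    · intro hm
      refine Submodule.smul_induction_on hm (fun a ha n _ => ?_)
        (fun x y hx hy => Submodule.add_mem _ hx hy)
      rw [← algebraMap_smul S a n]
      exact Submodule.smul_mem_smul (Ideal.mem_map_of_mem _ ha) trivial
  ext s
  rw [Submodule.mem_colon_span_singleton, LinearMap.mem_ker,
    LinearMap.toSpanSingleton_apply, TensorProduct.smul_tmul', mem_eq, key]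
end

section
/- Let R be a commutative ring, L a finitely presented R-module, and M an R-module. Then sK_R(Hom_R(L,M)) = Supp_R(L) ∩ sK_R(M). -/
open TensorProduct

section Aux
set_option synthInstance.maxHeartbeats 1000000
set_option maxHeartbeats 2000000

universe u v

variable {R : Type u} [CommRing R]

/-- From `L_p ≠ 0` (with `L` finite) produce a nonzero additive map from `L` to a field `K`
which is semilinear along a ring hom `ρ : R →+* K` whose kernel is exactly `p`, and in which
every element can be written as a fraction over `R`. -/
theorem skp_exists_functional (L : Type v) [AddCommGroup L] [Module R L]
    [Module.Finite R L] (p : Ideal R) [hp : p.IsPrime]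
    (h : Nontrivial (LocalizedModule p.primeCompl L)) :
    ∃ (K : Type u) (_ : Field K) (ρ : R →+* K) (lam : L →+ K),
      (∀ r : R, ρ r = 0 ↔ r ∈ p) ∧
      (∀ (r : R) (y : L), lam (r • y) = ρ r * lam y) ∧
      (∀ e : K, ∃ u b : R, u ∉ p ∧ ρ u * e = ρ b) ∧
      (∃ y : L, lam y ≠ 0) := by
  classical
  letI A := Localization.AtPrime p
  letI LA := LocalizedModule p.primeCompl L
  letI : Module.Finite A LA :=
    Module.Finite.of_isLocalizedModule p.primeCompl (LocalizedModule.mkLinearMap p.primeCompl L)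
  let m : Ideal A := IsLocalRing.maximalIdeal A
  letI K := A ⧸ m
  letI : Field K := Ideal.Quotient.field m
  letI Q := LA ⧸ (m • ⊤ : Submodule A LA)
  -- Q is nontrivial by Nakayama
  haveI hQ : Nontrivial Q := by
    by_contra hq
    rw [not_nontrivial_iff_subsingleton] at hq
    have h1 : (m • ⊤ : Submodule A LA) = ⊤ :=
      Submodule.Quotient.subsingleton_iff.mp hq
    have h2 : (⊤ : Submodule A LA) = ⊥ :=
      Submodule.eq_bot_of_le_smul_of_le_jacobson_bot m ⊤ Module.Finite.fg_top h1.ge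
        (by rw [IsLocalRing.jacobson_eq_maximalIdeal ⊥ bot_ne_top])
    obtain ⟨a, b, hab⟩ := h
    exact hab (by
      have ha : a ∈ (⊥ : Submodule A LA) := h2 ▸ Submodule.mem_top
      have hb : b ∈ (⊥ : Submodule A LA) := h2 ▸ Submodule.mem_top
      rw [Submodule.mem_bot] at ha hb
      rw [ha, hb])
  obtain ⟨x, hx⟩ := exists_ne (0 : Q)
  obtain ⟨g0, hg0⟩ : ∃ g0 : Module.Dual K Q, g0 x ≠ 0 := by
    by_contra hg
    push_neg at hg
    exact hx ((Module.forall_dual_apply_eq_zero_iff K x).mp hg)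
  let ρ : R →+* K := (Ideal.Quotient.mk m).comp (algebraMap R A)
  let ι : L →ₗ[R] LA := LocalizedModule.mkLinearMap p.primeCompl L
  let π : LA →ₗ[A] Q := Submodule.mkQ _
  let lam : L →+ K := g0.toAddMonoidHom.comp ((π.toAddMonoidHom).comp ι.toAddMonoidHom)
  have hlam : ∀ y : L, lam y = g0 (π (ι y)) := fun _ => rfl
  have hAsmul : ∀ (a : A) (q : Q), a • q = (Ideal.Quotient.mk m a) • q := by
    intro a q
    obtain ⟨z, rfl⟩ := Submodule.Quotient.mk_surjective _ q
    rfl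
  have hg0smul : ∀ (a : A) (q : Q), g0 (a • q) = Ideal.Quotient.mk m a * g0 q := by
    intro a q
    rw [hAsmul, map_smul, smul_eq_mul]
  have hρ : ∀ r : R, ρ r = 0 ↔ r ∈ p := by
    intro r
    show Ideal.Quotient.mk m (algebraMap R A r) = 0 ↔ r ∈ p
    rw [Ideal.Quotient.eq_zero_iff_mem]
    exact IsLocalization.AtPrime.to_map_mem_maximal_iff A p r
  have hsm : ∀ (r : R) (y : L), lam (r • y) = ρ r * lam y := by
    intro r y
    rw [hlam, hlam, map_smul, ← algebraMap_smul A r (ι y), map_smul, hg0smul]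
    rfl
  refine ⟨K, inferInstance, ρ, lam, hρ, hsm, ?_, ?_⟩
  · -- fractions
    intro e
    obtain ⟨a, rfl⟩ := Ideal.Quotient.mk_surjective e
    obtain ⟨⟨b, u⟩, hmk⟩ := IsLocalization.mk'_surjective p.primeCompl a
    have hmk : IsLocalization.mk' A b u = a := hmk
    refine ⟨u, b, u.2, ?_⟩
    show Ideal.Quotient.mk m (algebraMap R A u) * Ideal.Quotient.mk m a
      = Ideal.Quotient.mk m (algebraMap R A b)
    rw [← map_mul, ← hmk, IsLocalization.mk'_spec']
  · -- nonvanishing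
    have hgen : ∀ q : Q, ∃ (u : p.primeCompl) (y : L),
        (algebraMap R A u) • q = π (ι y) := by
      intro q
      obtain ⟨v, rfl⟩ := Submodule.Quotient.mk_surjective _ q
      induction v using LocalizedModule.induction_on with
      | h y u =>
        refine ⟨u, y, ?_⟩
        have hcan : (algebraMap R A u) • (LocalizedModule.mk y u : LA) = ι y := by
          rw [algebraMap_smul, LocalizedModule.smul'_mk]
          exact LocalizedModule.mk_cancel u y
        show (algebraMap R A u) • π (LocalizedModule.mk y u) = π (ι y)
        rw [← map_smul, hcan]
    by_contra hly
    push_neg at hly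
    refine hg0 ?_
    obtain ⟨u, y, hu⟩ := hgen x
    have h1 : Ideal.Quotient.mk m (algebraMap R A u) * g0 x = 0 := by
      rw [← hg0smul, hu, ← hlam, hly]
    have h2 : (Ideal.Quotient.mk m (algebraMap R A u) : K) ≠ 0 := by
      intro h0
      exact u.2 ((hρ u).mp h0)
    exact (mul_eq_zero.mp h1).resolve_left h2

end Aux

theorem stmt_17 {R : Type*} [CommRing R]
    (L : Type*) [AddCommGroup L] [Module R L] [Module.FinitePresentation R L]
    (M : Type*) [AddCommGroup M] [Module R M] (p : PrimeSpectrum R) :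
    IsStrongKrullPrime R (L →ₗ[R] M) p.asIdeal ↔
      p ∈ Module.support R L ∧ IsStrongKrullPrime R M p.asIdeal := by
  classical
  constructor
  · rintro ⟨hprime, hK⟩
    haveI := hprime
    refine ⟨?_, hprime, ?_⟩
    · -- p is in the support of L
      rw [Module.mem_support_iff_of_finite]
      intro a ha
      obtain ⟨φ, hφ1, hφ2⟩ := hK ⊥ ⟨∅, by simp⟩ bot_le
      refine hφ2 ?_
      rw [LinearMap.mem_ker, LinearMap.toSpanSingleton_apply]
      ext y
      simp only [LinearMap.smul_apply, LinearMap.zero_apply]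
      rw [← map_smul, Module.mem_annihilator.mp ha y, map_zero]
    · -- p is a strong Krull prime of M
      intro I hIfg hIp
      obtain ⟨φ, hφ1, hφ2⟩ := hK I hIfg hIp
      obtain ⟨s, hs⟩ := Module.Finite.fg_top (R := R) (M := L)
      have hc : ∃ c ∈ s, LinearMap.ker (LinearMap.toSpanSingleton R M (φ c)) ≤ p.asIdeal := by
        by_contra hno
        push_neg at hno
        have hex : ∀ c ∈ s, ∃ r, r • φ c = 0 ∧ r ∉ p.asIdeal := by
          intro c hcs
          obtain ⟨r, hr1, hr2⟩ := SetLike.not_le_iff_exists.mp (hno c hcs)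
          exact ⟨r, by simpa [LinearMap.mem_ker, LinearMap.toSpanSingleton_apply] using hr1, hr2⟩
        choose rfun hr1 hr2 using hex
        set r : R := ∏ c ∈ s.attach, rfun c.1 c.2 with hrdef
        have hrp : r ∈ p.asIdeal.primeCompl :=
          Submonoid.prod_mem _ (fun c _ => hr2 c.1 c.2)
        have hker : r • φ = 0 := by
          have hle : (⊤ : Submodule R L) ≤ LinearMap.ker (r • φ) := by
            rw [← hs]
            refine Submodule.span_le.mpr ?_
            intro c hcs
            rw [SetLike.mem_coe, LinearMap.mem_ker, LinearMap.smul_apply]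
            have hcs' : c ∈ s := hcs
            have hsplit : (∏ x ∈ s.attach.erase ⟨c, hcs'⟩, rfun x.1 x.2) * rfun c hcs' = r :=
              Finset.prod_erase_mul _ _ (Finset.mem_attach s ⟨c, hcs'⟩)
            rw [← hsplit, mul_smul, hr1 c hcs', smul_zero]
          have : LinearMap.ker (r • φ) = ⊤ := top_le_iff.mp hle
          exact LinearMap.ker_eq_top.mp this
        exact hrp (hφ2 (by rw [LinearMap.mem_ker, LinearMap.toSpanSingleton_apply]; exact hker))
      obtain ⟨c, hcs, hcle⟩ := hc
      refine ⟨φ c, ?_, hcle⟩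
      intro a haI
      rw [LinearMap.mem_ker, LinearMap.toSpanSingleton_apply]
      have h0 := hφ1 haI
      rw [LinearMap.mem_ker, LinearMap.toSpanSingleton_apply] at h0
      show a • φ c = 0
      calc a • φ c = (a • φ) c := rfl
        _ = 0 := by rw [h0]; rfl
  · rintro ⟨hsupp, hprime, hK⟩
    haveI := hprime
    refine ⟨hprime, ?_⟩
    intro I hIfg hIp
    rw [Module.mem_support_iff] at hsupp
    obtain ⟨K, _, ρ, lam, hρ, hsm, hfrac, y0, hy0⟩ :=
      skp_exists_functional L p.asIdeal hsupp
    obtain ⟨s, hspan, hker⟩ := Module.FinitePresentation.out (R := R) (M := L)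
    set f : (↥s →₀ R) →ₗ[R] L := Finsupp.linearCombination R ((↑) : ↥s → L) with hf
    obtain ⟨t, ht⟩ := hker
    -- clear denominators
    choose u b0 hu hub using fun c : ↥s => hfrac (lam ↑c)
    set U : R := ∏ c : ↥s, u c with hU
    have hUp : U ∈ p.asIdeal.primeCompl := Submonoid.prod_mem _ (fun c _ => hu c)
    set b : ↥s → R := fun c => (∏ c' ∈ Finset.univ.erase c, u c') * b0 c with hb
    have hbval : ∀ c : ↥s, ρ U * lam ↑c = ρ (b c) := by
      intro c
      have h1 : (∏ c' ∈ Finset.univ.erase c, u c') * u c = U :=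
        Finset.prod_erase_mul _ _ (Finset.mem_univ c)
      calc ρ U * lam ↑c
          = ρ ((∏ c' ∈ Finset.univ.erase c, u c') * u c) * lam ↑c := by rw [h1]
        _ = ρ (∏ c' ∈ Finset.univ.erase c, u c') * (ρ (u c) * lam ↑c) := by
            rw [map_mul, mul_assoc]
        _ = ρ (∏ c' ∈ Finset.univ.erase c, u c') * ρ (b0 c) := by rw [hub c]
        _ = ρ (b c) := by rw [← map_mul]
    have hρU : ρ U ≠ 0 := fun h0 => hUp ((hρ U).mp h0)
    have hc0 : ∃ c : ↥s, b c ∉ p.asIdeal := by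
      by_contra hall
      push_neg at hall
      have hlc : ∀ c : ↥s, lam ↑c = 0 := by
        intro c
        have h0 : ρ U * lam ↑c = 0 := by rw [hbval c]; exact (hρ (b c)).mpr (hall c)
        exact (mul_eq_zero.mp h0).resolve_left hρU
      let N : Submodule R L :=
        { carrier := {y | lam y = 0}
          add_mem' := fun {a' b'} ha' hb' => by
            simp only [Set.mem_setOf_eq] at *
            rw [map_add, ha', hb', add_zero]
          zero_mem' := by simp
          smul_mem' := fun r y hy => by
            simp only [Set.mem_setOf_eq] at *
            rw [hsm, hy, mul_zero] }
      have hle : (⊤ : Submodule R L) ≤ N := by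
        rw [← hspan]
        exact Submodule.span_le.mpr (fun y hy => hlc ⟨y, hy⟩)
      exact hy0 (hle Submodule.mem_top)
    obtain ⟨c0, hc0⟩ := hc0
    set E : (↥s →₀ R) → R := fun w => w.sum fun c r => r * b c with hE
    have hEp : ∀ w ∈ t, E w ∈ p.asIdeal := by
      intro w hw
      have hwmem : w ∈ LinearMap.ker f := ht ▸ Submodule.subset_span hw
      have hwker : f w = 0 := hwmem
      refine (hρ (E w)).mp ?_
      have h1 : ρ (E w) = w.sum fun c r => ρ r * ρ (b c) := by
        rw [hE]
        rw [map_finsuppSum]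
        exact Finsupp.sum_congr fun c _ => by rw [map_mul]
      have h3 : lam (f w) = w.sum fun c r => ρ r * lam ↑c := by
        rw [hf, Finsupp.linearCombination_apply, map_finsuppSum]
        exact Finsupp.sum_congr fun c _ => hsm _ _
      rw [h1]
      calc (w.sum fun c r => ρ r * ρ (b c))
          = ρ U * w.sum fun c r => ρ r * lam ↑c := by
            rw [Finsupp.mul_sum]
            exact Finsupp.sum_congr fun c _ => by rw [← hbval c]; ring
        _ = ρ U * lam (f w) := by rw [h3]
        _ = 0 := by rw [hwker, map_zero, mul_zero]
    set J : Ideal R := I ⊔ Ideal.span (↑(t.image E) : Set R) with hJ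
    have hJfg : J.FG := Submodule.FG.sup hIfg ⟨t.image E, rfl⟩
    have hJp : J ≤ p.asIdeal := by
      refine sup_le hIp (Ideal.span_le.mpr ?_)
      intro x hx
      simp only [Finset.coe_image, Set.mem_image, Finset.mem_coe] at hx
      obtain ⟨w, hw, rfl⟩ := hx
      exact hEp w hw
    obtain ⟨z, hz1, hz2⟩ := hK J hJfg hJp
    have hz1' : ∀ r ∈ J, r • z = 0 := fun r hr => by
      have h0 := hz1 hr
      rwa [LinearMap.mem_ker, LinearMap.toSpanSingleton_apply] at h0
    set g : (↥s →₀ R) →ₗ[R] M := Finsupp.linearCombination R (fun c : ↥s => b c • z) with hg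
    have hgval : ∀ w, g w = E w • z := by
      intro w
      rw [hg, Finsupp.linearCombination_apply]
      simp only [hE, Finsupp.sum, Finset.sum_smul, smul_smul]
    have hkerle : LinearMap.ker f ≤ LinearMap.ker g := by
      rw [← ht]
      refine Submodule.span_le.mpr ?_
      intro w hw
      rw [SetLike.mem_coe, LinearMap.mem_ker, hgval]
      refine hz1' (E w) (Ideal.mem_sup_right (Ideal.subset_span ?_))
      simp only [Finset.coe_image, Set.mem_image, Finset.mem_coe]
      exact ⟨w, hw, rfl⟩
    have hfsurj : Function.Surjective f := by
      rw [← LinearMap.range_eq_top, hf, Finsupp.range_linearCombination]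
      simpa only [Subtype.range_coe_subtype, Finset.setOf_mem] using hspan
    let e := f.quotKerEquivOfSurjective hfsurj
    let φ : L →ₗ[R] M := (Submodule.liftQ (LinearMap.ker f) g hkerle).comp e.symm.toLinearMap
    have hΦ : ∀ w, φ (f w) = g w := by
      intro w
      have he : e (Submodule.Quotient.mk w) = f w := by
        simp [e, LinearMap.quotKerEquivOfSurjective, LinearMap.quotKerEquivRange_apply_mk]
      have h2 : e.symm (f w) = Submodule.Quotient.mk w := by
        rw [← he, LinearEquiv.symm_apply_apply]
      show Submodule.liftQ (LinearMap.ker f) g hkerle (e.symm (f w)) = g w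
      rw [h2, Submodule.liftQ_apply]
    refine ⟨φ, ?_, ?_⟩
    · intro r hrI
      rw [LinearMap.mem_ker, LinearMap.toSpanSingleton_apply]
      ext y
      obtain ⟨w, rfl⟩ := hfsurj y
      show r • φ (f w) = 0
      rw [hΦ, hgval, smul_smul, mul_comm, mul_smul, hz1' r (Ideal.mem_sup_left hrI), smul_zero]
    · intro r hr
      rw [LinearMap.mem_ker, LinearMap.toSpanSingleton_apply] at hr
      have happ : r • φ ↑c0 = 0 := by
        calc r • φ ↑c0 = (r • φ) ↑c0 := rfl
          _ = 0 := by rw [hr]; rfl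
      have hφc0 : φ ↑c0 = b c0 • z := by
        have h1 : f (Finsupp.single c0 1) = ↑c0 := by
          rw [hf, Finsupp.linearCombination_single, one_smul]
        have h2 : E (Finsupp.single c0 1) = b c0 := by
          simp [hE]
        rw [← h1, hΦ, hgval, h2]
      rw [hφc0, smul_smul] at happ
      have hmem : r * b c0 ∈ p.asIdeal := hz2 (by
        rw [LinearMap.mem_ker, LinearMap.toSpanSingleton_apply]; exact happ)
      exact (hprime.mem_or_mem hmem).resolve_right hc0
end

section
/- Let (R,m) be a commutative local ring and M an R-module with m ∈ sK_R(M). Then for every nonzero finitely presented R-module L, Hom_R(L,M) ≠ 0. -/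
open TensorProduct

/-- From a finite spanning set of a nontrivial module, extract a f.g. submodule `N` and `y ∉ N`
with `N ⊔ span {y} = ⊤`. -/
lemma exists_fg_cocyclic {R : Type*} [CommRing R] {L : Type*} [AddCommGroup L] [Module R L]
    [Nontrivial L] (s : Finset L) (hs : Submodule.span R (s : Set L) = ⊤) :
    ∃ N : Submodule R L, N.FG ∧ ∃ y : L, y ∉ N ∧ N ⊔ Submodule.span R {y} = ⊤ := by
  classical
  induction s using Finset.induction with
  | empty =>
    simp only [Finset.coe_empty, Submodule.span_empty] at hs
    exact absurd hs bot_ne_top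
  | @insert y s hys ih =>
    by_cases hspan : Submodule.span R (s : Set L) = ⊤
    · exact ih hspan
    · refine ⟨Submodule.span R (s : Set L), Submodule.fg_span s.finite_toSet, y, ?_, ?_⟩
      · intro hy
        apply hspan
        rw [← hs, Finset.coe_insert, Submodule.span_insert_eq_span hy]
      · rw [← hs, Finset.coe_insert, Submodule.span_insert, sup_comm]

theorem stmt_18 {R : Type*} [CommRing R] [IsLocalRing R]
    {M : Type*} [AddCommGroup M] [Module R M]
    (h : IsStrongKrullPrime R M (IsLocalRing.maximalIdeal R))
    (L : Type*) [AddCommGroup L] [Module R L] [Module.FinitePresentation R L] [Nontrivial L] :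
    ∃ f : L →ₗ[R] M, f ≠ 0 := by
  classical
  obtain ⟨s, hs⟩ := Module.Finite.fg_top (R := R) (M := L)
  obtain ⟨N, hNfg, y, hyN, hNy⟩ := exists_fg_cocyclic s hs
  -- the quotient L/N is finitely presented
  have hQfp : Module.FinitePresentation R (L ⧸ N) :=
    Module.finitePresentation_of_surjective N.mkQ N.mkQ_surjective (by rwa [Submodule.ker_mkQ])
  set ybar : L ⧸ N := N.mkQ y with hybar
  have hybar_ne : ybar ≠ 0 := by
    simpa [hybar, Submodule.Quotient.mk_eq_zero] using hyN
  -- toSpanSingleton onto L/N is surjective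
  have hsurj : Function.Surjective (LinearMap.toSpanSingleton R (L ⧸ N) ybar) := by
    intro x
    obtain ⟨x, rfl⟩ := N.mkQ_surjective x
    have : x ∈ N ⊔ Submodule.span R {y} := hNy ▸ Submodule.mem_top
    obtain ⟨a, ha, b, hb, rfl⟩ := Submodule.mem_sup.mp this
    obtain ⟨r, rfl⟩ := Submodule.mem_span_singleton.mp hb
    refine ⟨r, ?_⟩
    have ha0 : N.mkQ a = 0 := (Submodule.Quotient.mk_eq_zero N).mpr ha
    simp only [LinearMap.toSpanSingleton_apply, hybar, ← map_smul, map_add, ha0, zero_add]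
  set I : Ideal R := LinearMap.ker (LinearMap.toSpanSingleton R (L ⧸ N) ybar) with hI
  have hIfg : I.FG := Module.FinitePresentation.fg_ker _ hsurj
  have hIne : I ≠ ⊤ := by
    intro htop
    have : (1 : R) ∈ I := htop ▸ Submodule.mem_top
    simp [hI, LinearMap.mem_ker] at this
    exact hybar_ne this
  have hIle : I ≤ IsLocalRing.maximalIdeal R := IsLocalRing.le_maximalIdeal hIne
  obtain ⟨z, hz1, hz2⟩ := h.2 I hIfg hIle
  have hzne : z ≠ 0 := by
    intro hz0
    have h1m : (1 : R) ∈ LinearMap.ker (LinearMap.toSpanSingleton R M z) := by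
      simp [hz0]
    exact (IsLocalRing.maximalIdeal.isMaximal R).ne_top
      ((Ideal.eq_top_iff_one _).mpr (hz2 h1m))
  -- build the map
  let e : (R ⧸ I) ≃ₗ[R] (L ⧸ N) :=
    (LinearMap.toSpanSingleton R (L ⧸ N) ybar).quotKerEquivOfSurjective hsurj
  let g : (R ⧸ I) →ₗ[R] M := Submodule.liftQ I (LinearMap.toSpanSingleton R M z) hz1
  refine ⟨(g ∘ₗ e.symm.toLinearMap) ∘ₗ N.mkQ, ?_⟩
  intro hf0
  apply hzne
  have h1 : e (Submodule.Quotient.mk 1) = ybar := by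
    simp [e, LinearMap.quotKerEquivOfSurjective]
    erw [LinearMap.quotKerEquivRange_apply_mk]
    simp
  have := congrArg (fun f : L →ₗ[R] M => f y) hf0
  simp only [LinearMap.comp_apply, LinearMap.zero_apply] at this
  rw [show N.mkQ y = e (Submodule.Quotient.mk 1) from h1.symm] at this
  simp only [LinearEquiv.coe_coe, LinearEquiv.symm_apply_apply] at this
  have h2 : g (Submodule.Quotient.mk (1 : R)) = z := by
    rw [show g (Submodule.Quotient.mk (1 : R)) = (LinearMap.toSpanSingleton R M z) 1 from
      Submodule.liftQ_apply I _ 1]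
    simp
  exact h2.symm.trans this
end

section
/- Let φ: R → S be a ring homomorphism, L a finitely presented R-module, and M an S-module. Then sK_S(Hom_R(L,M)) = (φ*)^{-1}(Supp_R(L)) ∩ sK_S(M), where Hom_R(L,M) is an S-module via the S-action on M. -/
open Function

set_option maxHeartbeats 1000000 in
set_option synthInstance.maxHeartbeats 400000 in
lemma exists_good_vector {R : Type*} [CommRing R] {p : Ideal R} [hp : p.IsPrime]
    {L : Type*} [AddCommGroup L] [Module R L]
    {n m : ℕ} (q : (Fin n → R) →ₗ[R] L) (hq : Function.Surjective q)
    (k : Fin m → (Fin n → R)) (hk : ∀ j, q (k j) = 0)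
    (hAnn : Module.annihilator R L ≤ p) :
    ∃ c : Fin n → R, (∃ i, c i ∉ p) ∧ ∀ j, (∑ i, k j i * c i) ∈ p := by
  classical
  set ψ : R →+* FractionRing (R ⧸ p) :=
    (algebraMap (R ⧸ p) (FractionRing (R ⧸ p))).comp (Ideal.Quotient.mk p) with hψdef
  have hψ : ∀ r : R, ψ r = 0 ↔ r ∈ p := by
    intro r
    rw [hψdef, RingHom.comp_apply, ← (algebraMap (R ⧸ p) (FractionRing (R ⧸ p))).map_zero]
    rw [(IsFractionRing.injective (R ⧸ p) (FractionRing (R ⧸ p))).eq_iff,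
      Ideal.Quotient.eq_zero_iff_mem]
  set kb : Fin m → (Fin n → FractionRing (R ⧸ p)) := fun j i => ψ (k j i) with hkbdef
  by_contra hcon
  push_neg at hcon
  -- step 1 : the images of the relations span κ^n
  have hspan : Submodule.span (FractionRing (R ⧸ p)) (Set.range kb) = ⊤ := by
    by_contra hW
    obtain ⟨f, hf0, hfW⟩ := Submodule.exists_dual_map_eq_bot_of_lt_top
      (lt_top_iff_ne_top.mpr hW) inferInstance
    set c' : Fin n → FractionRing (R ⧸ p) := fun i => f (fun j => if i = j then 1 else 0)
      with hc'def
    have hc'ne : ∃ i, c' i ≠ 0 := by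
      by_contra h
      push_neg at h
      refine hf0 (LinearMap.ext fun v => ?_)
      rw [LinearMap.pi_apply_eq_sum_univ f v]
      refine Eq.trans (Finset.sum_eq_zero fun i _ => ?_) (by simp)
      rw [show f (fun j => if i = j then (1 : FractionRing (R ⧸ p)) else 0) = 0 from h i,
        smul_zero]
    have hfk : ∀ j, f (kb j) = 0 := by
      intro j
      have h1 : kb j ∈ Submodule.span (FractionRing (R ⧸ p)) (Set.range kb) :=
        Submodule.subset_span ⟨j, rfl⟩
      have h2 : f (kb j) ∈ (Submodule.span (FractionRing (R ⧸ p)) (Set.range kb)).map f :=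
        Submodule.mem_map_of_mem h1
      rw [hfW] at h2
      simpa using h2
    obtain ⟨b, hb⟩ := IsLocalization.exist_integer_multiples (nonZeroDivisors (R ⧸ p))
      Finset.univ c'
    have hb' : ∀ i : Fin n, ∃ d : R ⧸ p,
        algebraMap (R ⧸ p) (FractionRing (R ⧸ p)) d = (b : R ⧸ p) • c' i := by
      intro i
      exact hb i (Finset.mem_univ i)
    choose d hd using hb'
    choose c hc using fun i => Ideal.Quotient.mk_surjective (I := p) (d i)
    have hψc : ∀ i, ψ (c i) = (b : R ⧸ p) • c' i := by
      intro i
      rw [hψdef, RingHom.comp_apply, hc, hd]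
    have hbK : algebraMap (R ⧸ p) (FractionRing (R ⧸ p)) (b : R ⧸ p) ≠ 0 := by
      intro h
      exact nonZeroDivisors.ne_zero b.2
        ((IsFractionRing.injective (R ⧸ p) (FractionRing (R ⧸ p))) (by simpa using h))
    obtain ⟨i0, hi0⟩ := hc'ne
    have hci0 : c i0 ∉ p := by
      rw [← hψ]
      rw [hψc i0, Algebra.smul_def]
      exact mul_ne_zero hbK hi0
    obtain ⟨j, hj⟩ := hcon c ⟨i0, hci0⟩
    apply hj
    rw [← hψ, map_sum]
    have heach : ∀ i, ψ (k j i * c i) = (b : R ⧸ p) • (kb j i * c' i) := by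
      intro i
      rw [map_mul, hψc i, hkbdef, Algebra.smul_def, Algebra.smul_def]
      ring
    rw [Finset.sum_congr rfl fun i _ => heach i, ← Finset.smul_sum]
    have hfkb : f (kb j) = ∑ i, kb j i * c' i := by
      rw [LinearMap.pi_apply_eq_sum_univ f (kb j)]
      simp [hc'def, smul_eq_mul]
    rw [← hfkb, hfk j, smul_zero]
  -- step 2 : clear denominators and apply the determinant trick
  have hmem : ∀ i : Fin n, ∃ t : Fin m → FractionRing (R ⧸ p),
      ∑ j, t j • kb j = (fun jj => if i = jj then (1 : FractionRing (R ⧸ p)) else 0) := by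
    intro i
    rw [← Submodule.mem_span_range_iff_exists_fun, hspan]
    trivial
  choose t ht using hmem
  obtain ⟨b, hb⟩ := IsLocalization.exist_integer_multiples_of_finite (nonZeroDivisors (R ⧸ p))
    (fun ij : Fin n × Fin m => t ij.1 ij.2)
  have hb' : ∀ ij : Fin n × Fin m, ∃ a : R ⧸ p,
      algebraMap (R ⧸ p) (FractionRing (R ⧸ p)) a = (b : R ⧸ p) • t ij.1 ij.2 :=
    fun ij => hb ij
  choose a' ha' using hb'
  choose a ha using fun ij => Ideal.Quotient.mk_surjective (I := p) (a' ij)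
  obtain ⟨s, hs⟩ := Ideal.Quotient.mk_surjective (I := p) (b : R ⧸ p)
  set B : Matrix (Fin n) (Fin n) R := Matrix.of fun i tt => ∑ j, a (i, j) * k j tt with hBdef
  have key1 : ∀ i tt, (if i = tt then s else 0) - B i tt ∈ p := by
    intro i tt
    rw [← hψ, map_sub, hBdef]
    show ψ (if i = tt then s else 0) - ψ (∑ j, a (i, j) * k j tt) = 0
    rw [map_sum]
    have h1 : ∀ j, ψ (a (i, j) * k j tt) = ((b : R ⧸ p) • t i j) * kb j tt := by
      intro j
      rw [map_mul]
      rw [hψdef, RingHom.comp_apply, ha, ha' (i, j)]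
    rw [Finset.sum_congr rfl fun j _ => h1 j]
    have h2 : ∑ j, ((b : R ⧸ p) • t i j) * kb j tt = (b : R ⧸ p) • ∑ j, t i j * kb j tt := by
      rw [Finset.smul_sum]
      exact Finset.sum_congr rfl fun j _ => by rw [smul_mul_assoc]
    rw [h2]
    have h3 : ∑ j, t i j * kb j tt = (if i = tt then (1 : FractionRing (R ⧸ p)) else 0) := by
      have := congrFun (ht i) tt
      simpa [Finset.sum_apply, smul_eq_mul] using this
    rw [h3]
    have h4 : ψ (if i = tt then s else 0)
        = (b : R ⧸ p) • (if i = tt then (1 : FractionRing (R ⧸ p)) else 0) := by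
      by_cases h : i = tt <;>
        simp [h, hψdef, RingHom.comp_apply, hs, Algebra.smul_def]
    rw [h4, sub_self]
  set x : Fin n → L := fun i => q (fun jj => if i = jj then 1 else 0) with hxdef
  have key2 : ∀ i, ∑ tt, B i tt • x tt = 0 := by
    intro i
    have h1 : ∑ tt, B i tt • x tt = q (fun jj => B i jj) := by
      rw [hxdef]
      rw [show (fun jj => B i jj) = ∑ tt, B i tt • fun jj => if tt = jj then (1 : R) else 0 from
        pi_eq_sum_univ (fun jj => B i jj)]
      rw [map_sum]
      exact Finset.sum_congr rfl fun tt _ => by rw [map_smul]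
    rw [h1]
    have h2 : (fun jj => B i jj) = ∑ j, a (i, j) • k j := by
      ext jj
      simp [hBdef, Finset.sum_apply, smul_eq_mul]
    rw [h2, map_sum]
    simp only [map_smul, hk, smul_zero, Finset.sum_const_zero]
  have key3 : ∀ r, B.det • x r = 0 := by
    intro r
    have hadj : Matrix.adjugate B * B = B.det • (1 : Matrix (Fin n) (Fin n) R) :=
      Matrix.adjugate_mul B
    have h1 : B.det • x r = ∑ tt, ((B.det • (1 : Matrix (Fin n) (Fin n) R)) r tt) • x tt := by
      rw [Finset.sum_eq_single r]
      · simp [Matrix.smul_apply, Matrix.one_apply]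
      · intro tt _ htt
        simp [Matrix.smul_apply, Matrix.one_apply, Ne.symm htt]
      · simp
    rw [h1, ← hadj]
    have h2 : ∀ tt, (Matrix.adjugate B * B) r tt • x tt
        = ∑ i, (Matrix.adjugate B r i * B i tt) • x tt := by
      intro tt
      rw [Matrix.mul_apply, Finset.sum_smul]
    rw [Finset.sum_congr rfl fun tt _ => h2 tt, Finset.sum_comm]
    have h3 : ∀ i, ∑ tt, (Matrix.adjugate B r i * B i tt) • x tt
        = Matrix.adjugate B r i • ∑ tt, B i tt • x tt := by
      intro i
      rw [Finset.smul_sum]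
      exact Finset.sum_congr rfl fun tt _ => by rw [mul_smul]
    rw [Finset.sum_congr rfl fun i _ => h3 i]
    simp [key2]
  have key4 : B.det ∈ Module.annihilator R L := by
    rw [Module.mem_annihilator]
    intro y
    obtain ⟨v, rfl⟩ := hq y
    rw [show v = ∑ i, v i • fun jj => if i = jj then (1 : R) else 0 from pi_eq_sum_univ v,
      map_sum]
    rw [Finset.smul_sum]
    refine Finset.sum_eq_zero fun i _ => ?_
    rw [map_smul, smul_comm, key3, smul_zero]
  have key5 : B.det ∈ p := hAnn key4
  have hmap : B.map (Ideal.Quotient.mk p) = Matrix.diagonal (fun _ => (b : R ⧸ p)) := by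
    ext i tt
    have hh := key1 i tt
    rw [← Ideal.Quotient.eq_zero_iff_mem, map_sub, sub_eq_zero] at hh
    rw [Matrix.map_apply, ← hh, Matrix.diagonal_apply]
    by_cases h : i = tt <;> simp [h, hs]
  have hdet : ((b : R ⧸ p)) ^ n = 0 := by
    have h1 : (B.map (Ideal.Quotient.mk p)).det = Ideal.Quotient.mk p B.det :=
      (RingHom.map_det (Ideal.Quotient.mk p) B).symm
    rw [hmap, Matrix.det_diagonal, Finset.prod_const] at h1
    rw [Ideal.Quotient.eq_zero_iff_mem.mpr key5] at h1
    simpa using h1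
  exact nonZeroDivisors.ne_zero (pow_mem b.2 n) hdet
open TensorProduct

theorem stmt_19 {R S : Type*} [CommRing R] [CommRing S] [Algebra R S]
    (L : Type*) [AddCommGroup L] [Module R L] [Module.FinitePresentation R L]
    (M : Type*) [AddCommGroup M] [Module S M] [Module R M] [IsScalarTower R S M]
    (Q : PrimeSpectrum S) :
    IsStrongKrullPrime S (L →ₗ[R] M) Q.asIdeal ↔
      PrimeSpectrum.comap (algebraMap R S) Q ∈ Module.support R L ∧
        IsStrongKrullPrime S M Q.asIdeal := by
  classical
  constructor
  · rintro ⟨hQp, hQ⟩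
    constructor
    · -- the comap is in the support of L
      rw [Module.support_eq_zeroLocus, PrimeSpectrum.mem_zeroLocus]
      intro r hr
      obtain ⟨f, -, hf2⟩ := hQ ⊥ Submodule.fg_bot bot_le
      rw [SetLike.mem_coe, PrimeSpectrum.comap_asIdeal, Ideal.mem_comap]
      apply hf2
      rw [LinearMap.mem_ker, LinearMap.toSpanSingleton_apply]
      refine LinearMap.ext fun y => ?_
      rw [LinearMap.smul_apply, algebraMap_smul, ← map_smul,
        Module.mem_annihilator.mp hr y, map_zero, LinearMap.zero_apply]
    · -- Q is a strong Krull prime of M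
      refine ⟨Q.2, fun J hJfg hJQ => ?_⟩
      obtain ⟨f, hf1, hf2⟩ := hQ J hJfg hJQ
      obtain ⟨nn, xg, hxg⟩ := Module.Finite.exists_fin (R := R) (M := L)
      have hex : ∃ i, LinearMap.ker (LinearMap.toSpanSingleton S M (f (xg i))) ≤ Q.asIdeal := by
        by_contra hno
        push_neg at hno
        have hno' : ∀ i, ∃ s : S, s • f (xg i) = 0 ∧ s ∉ Q.asIdeal := by
          intro i
          obtain ⟨s, hs1, hs2⟩ := SetLike.not_le_iff_exists.mp (hno i)
          exact ⟨s, by simpa [LinearMap.toSpanSingleton_apply] using hs1, hs2⟩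
        choose sv hsv1 hsv2 using hno'
        have hprod : (∏ i, sv i) ∈ LinearMap.ker
            (LinearMap.toSpanSingleton S (L →ₗ[R] M) f) := by
          rw [LinearMap.mem_ker, LinearMap.toSpanSingleton_apply]
          refine LinearMap.ext fun y => ?_
          have hy : y ∈ Submodule.span R (Set.range xg) := hxg ▸ Submodule.mem_top
          obtain ⟨r, rfl⟩ := (Submodule.mem_span_range_iff_exists_fun R).mp hy
          rw [LinearMap.smul_apply, map_sum, Finset.smul_sum, LinearMap.zero_apply]
          refine Finset.sum_eq_zero fun i _ => ?_
          rw [map_smul, smul_comm, show (∏ i, sv i) • f (xg i) = 0 from ?_, smul_zero]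
          rw [← Finset.mul_prod_erase Finset.univ sv (Finset.mem_univ i), mul_comm, mul_smul,
            hsv1 i, smul_zero]
        have := hf2 hprod
        obtain ⟨i, -, hi⟩ := (Ideal.IsPrime.prod_mem_iff).mp this
        exact hsv2 i hi
      obtain ⟨i, hi⟩ := hex
      refine ⟨f (xg i), ?_, hi⟩
      intro s hs
      have hsf : s • f = 0 := by simpa [LinearMap.toSpanSingleton_apply] using hf1 hs
      rw [LinearMap.mem_ker, LinearMap.toSpanSingleton_apply]
      calc s • f (xg i) = (s • f) (xg i) := rfl
        _ = 0 := by rw [hsf, LinearMap.zero_apply]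
  · rintro ⟨hsupp, hQM, hM⟩
    refine ⟨Q.2, fun J hJfg hJQ => ?_⟩
    obtain ⟨n, q, hq⟩ := Module.Finite.exists_fin' R L
    have hker : (LinearMap.ker q).FG := Module.FinitePresentation.fg_ker q hq
    obtain ⟨m, k, hk⟩ := Submodule.fg_iff_exists_fin_generating_family.mp hker
    have hkq : ∀ j, q (k j) = 0 := fun j =>
      LinearMap.mem_ker.mp (hk ▸ Submodule.subset_span ⟨j, rfl⟩)
    have hAnn : Module.annihilator R L ≤ (PrimeSpectrum.comap (algebraMap R S) Q).asIdeal := by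
      rw [Module.support_eq_zeroLocus, PrimeSpectrum.mem_zeroLocus] at hsupp
      exact hsupp
    obtain ⟨c, ⟨i0, hi0⟩, hcj⟩ := exists_good_vector
      (p := (PrimeSpectrum.comap (algebraMap R S) Q).asIdeal) q hq k hkq hAnn
    set J' : Ideal S := J ⊔ Ideal.span (Set.range fun j => algebraMap R S (∑ i, k j i * c i))
      with hJ'def
    have hJ'fg : J'.FG := Submodule.FG.sup hJfg (Submodule.fg_span (Set.finite_range _))
    have hJ'Q : J' ≤ Q.asIdeal := by
      refine sup_le hJQ (Ideal.span_le.mpr ?_)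
      rintro _ ⟨j, rfl⟩
      have := hcj j
      rw [PrimeSpectrum.comap_asIdeal, Ideal.mem_comap] at this
      exact this
    obtain ⟨z, hz1, hz2⟩ := hM J' hJ'fg hJ'Q
    have hzmem : ∀ u : S, u ∈ J' → u • z = 0 := by
      intro u hu
      have := hz1 hu
      rwa [LinearMap.mem_ker, LinearMap.toSpanSingleton_apply] at this
    -- the linear map `g` on the free module
    set g : (Fin n → R) →ₗ[R] M :=
      { toFun := fun v => (∑ i, v i * c i) • z
        map_add' := by
          intro v w
          simp only [Pi.add_apply, add_mul, Finset.sum_add_distrib, add_smul]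
        map_smul' := by
          intro r v
          simp only [Pi.smul_apply, smul_eq_mul, RingHom.id_apply, mul_assoc, ← Finset.mul_sum,
            mul_smul] } with hgdef
    have hgapp : ∀ v, g v = (∑ i, v i * c i) • z := fun v => rfl
    have hkerg : LinearMap.ker q ≤ LinearMap.ker g := by
      rw [← hk, Submodule.span_le]
      rintro _ ⟨j, rfl⟩
      rw [SetLike.mem_coe, LinearMap.mem_ker, hgapp, ← algebraMap_smul S]
      exact hzmem _ (le_sup_right (α := Ideal S) (Ideal.subset_span ⟨j, rfl⟩))
    set f : L →ₗ[R] M :=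
      (Submodule.liftQ (LinearMap.ker q) g hkerg).comp
        (q.quotKerEquivOfSurjective hq).symm.toLinearMap with hfdef
    have hfq : ∀ v, f (q v) = g v := by
      intro v
      have h1 : (q.quotKerEquivOfSurjective hq).symm (q v)
          = Submodule.Quotient.mk v := by
        rw [LinearEquiv.symm_apply_eq]
        rfl
      rw [hfdef, LinearMap.comp_apply, LinearEquiv.coe_toLinearMap, h1, Submodule.liftQ_apply]
    refine ⟨f, ?_, ?_⟩
    · intro u hu
      rw [LinearMap.mem_ker, LinearMap.toSpanSingleton_apply]
      refine LinearMap.ext fun y => ?_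
      obtain ⟨v, rfl⟩ := hq y
      rw [LinearMap.smul_apply, hfq, hgapp, LinearMap.zero_apply,
        ← algebraMap_smul S (∑ i, v i * c i) z, smul_smul, mul_comm, ← smul_smul,
        hzmem u (le_sup_left (α := Ideal S) hu), smul_zero]
    · intro u hu
      rw [LinearMap.mem_ker, LinearMap.toSpanSingleton_apply] at hu
      have h0 : u • f (q (fun jj => if i0 = jj then 1 else 0)) = 0 := by
        calc u • f (q (fun jj => if i0 = jj then 1 else 0))
            = (u • f) (q (fun jj => if i0 = jj then 1 else 0)) := rfl
          _ = 0 := by rw [hu, LinearMap.zero_apply]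
      rw [hfq, hgapp] at h0
      have hsum : (∑ i, (if i0 = i then (1 : R) else 0) * c i) = c i0 := by
        simp
      rw [hsum, ← algebraMap_smul S (c i0) z, smul_smul] at h0
      have hmem : u * algebraMap R S (c i0) ∈ Q.asIdeal := by
        apply hz2
        rwa [LinearMap.mem_ker, LinearMap.toSpanSingleton_apply]
      rcases Q.2.mem_or_mem hmem with h | h
      · exact h
      · exact absurd (by rwa [PrimeSpectrum.comap_asIdeal, Ideal.mem_comap] at hi0 ⊢) hi0
end
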